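/- arXiv:2505.01744 — 4 statements merged into one kernel-verified Lean document; each statement's English description precedes it below -/
import Mathlib

section
/- Let N be a positive integer, let g ∈ ℝ^{1×N} be a fixed row vector, and let v ∈ ℝ^N be a random vector whose coordinates are i.i.d. standard normal N(0,1). Then the mean squared error of the single-sample forward-gradient estimator satisfies E[‖(g v) vᵀ − g‖²] = (N+1)‖g‖², where ‖·‖ is the Euclidean norm on row vectors. -/
open MeasureTheory ProbabilityTheory Real

namespace FGaux


noncomputable def J (n : ℕ) : ℝ := ∫ x : ℝ, x ^ n * Real.exp (-(2⁻¹ : ℝ) * x ^ 2)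

lemma intJ (n : ℕ) : Integrable (fun x : ℝ => x ^ n * Real.exp (-(2⁻¹ : ℝ) * x ^ 2)) := by
  have h := integrable_rpow_mul_exp_neg_mul_sq (b := (2⁻¹ : ℝ)) (by norm_num)
    (s := (n : ℝ)) (lt_of_lt_of_le (by norm_num) (Nat.cast_nonneg n))
  simpa [Real.rpow_natCast] using h

lemma intE : Integrable (fun x : ℝ => Real.exp (-(2⁻¹ : ℝ) * x ^ 2)) :=
  integrable_exp_neg_mul_sq (by norm_num)

lemma J0 : J 0 = Real.sqrt (2 * π) := by
  have h := integral_gaussian (2⁻¹ : ℝ)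
  have : π / (2⁻¹ : ℝ) = 2 * π := by ring
  rw [this] at h
  simpa [J] using h

lemma hexp (x : ℝ) : HasDerivAt (fun y : ℝ => Real.exp (-(2⁻¹ : ℝ) * y ^ 2))
    (-x * Real.exp (-(2⁻¹ : ℝ) * x ^ 2)) x := by
  have h1 : HasDerivAt (fun y : ℝ => -(2⁻¹ : ℝ) * y ^ 2) (-x) x := by
    have := (hasDerivAt_pow 2 x).const_mul (-(2⁻¹ : ℝ))
    refine this.congr_deriv ?_
    push_cast
    ring
  have := h1.exp
  convert this using 1
  ring

lemma J1 : J 1 = 0 := by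
  have hderiv : ∀ x : ℝ, HasDerivAt (fun y : ℝ => -Real.exp (-(2⁻¹ : ℝ) * y ^ 2))
      (x ^ 1 * Real.exp (-(2⁻¹ : ℝ) * x ^ 2)) x := by
    intro x
    have := (hexp x).neg
    refine this.congr_deriv ?_
    ring
  exact integral_eq_zero_of_hasDerivAt_of_integrable hderiv (intJ 1) intE.neg

lemma J2 : J 2 = Real.sqrt (2 * π) := by
  have hderiv : ∀ x : ℝ, HasDerivAt (fun y : ℝ => -(y * Real.exp (-(2⁻¹ : ℝ) * y ^ 2)))
      (x ^ 2 * Real.exp (-(2⁻¹ : ℝ) * x ^ 2) - Real.exp (-(2⁻¹ : ℝ) * x ^ 2)) x := by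
    intro x
    have := ((hasDerivAt_id x).mul (hexp x)).neg
    refine this.congr_deriv ?_
    simp only [id_eq]
    ring
  have h0 := integral_eq_zero_of_hasDerivAt_of_integrable hderiv ((intJ 2).sub intE)
    ((intJ 1).neg.congr (Filter.Eventually.of_forall fun x => by simp))
  rw [integral_sub (intJ 2) intE, sub_eq_zero] at h0
  have h00 := J0
  simp only [J, pow_zero, one_mul] at h00
  rw [J, h0, h00]

lemma J4 : J 4 = 3 * Real.sqrt (2 * π) := by
  have hderiv : ∀ x : ℝ, HasDerivAt (fun y : ℝ => -(y ^ 3 * Real.exp (-(2⁻¹ : ℝ) * y ^ 2)))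
      (x ^ 4 * Real.exp (-(2⁻¹ : ℝ) * x ^ 2) - 3 * (x ^ 2 * Real.exp (-(2⁻¹ : ℝ) * x ^ 2))) x := by
    intro x
    have := ((hasDerivAt_pow 3 x).mul (hexp x)).neg
    refine this.congr_deriv ?_
    push_cast
    ring
  have h0 := integral_eq_zero_of_hasDerivAt_of_integrable hderiv ((intJ 4).sub ((intJ 2).const_mul 3))
    ((intJ 3).neg.congr (Filter.Eventually.of_forall fun x => by simp))
  rw [integral_sub (intJ 4) ((intJ 2).const_mul 3), sub_eq_zero] at h0
  rw [J, h0, integral_const_mul, ← J, J2]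


lemma gauss_eq : gaussianReal 0 1 =
    MeasureTheory.volume.withDensity (fun x => ((gaussianPDFReal 0 1 x).toNNReal : ENNReal)) := by
  rw [gaussianReal_of_var_ne_zero 0 one_ne_zero]
  rfl

lemma pdf01 (x : ℝ) : gaussianPDFReal 0 1 x
    = (Real.sqrt (2 * π))⁻¹ * Real.exp (-(2⁻¹ : ℝ) * x ^ 2) := by
  rw [gaussianPDFReal]
  norm_num
  left
  ring

lemma Mint (n : ℕ) : Integrable (fun x : ℝ => x ^ n) (gaussianReal 0 1) := by
  rw [gauss_eq, integrable_withDensity_iff_integrable_smul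
    ((measurable_gaussianPDFReal 0 1).real_toNNReal)]
  refine ((intJ n).const_mul ((Real.sqrt (2 * π))⁻¹)).congr
    (Filter.Eventually.of_forall fun x => ?_)
  simp only [NNReal.smul_def, Real.coe_toNNReal _ (gaussianPDFReal_nonneg 0 1 x), smul_eq_mul]
  rw [pdf01]
  ring

lemma Mval (n : ℕ) : ∫ x, x ^ n ∂(gaussianReal 0 1) = (Real.sqrt (2 * π))⁻¹ * J n := by
  rw [gauss_eq, integral_withDensity_eq_integral_smul
    ((measurable_gaussianPDFReal 0 1).real_toNNReal)]
  rw [J, ← integral_const_mul]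
  congr 1
  funext x
  simp only [NNReal.smul_def, Real.coe_toNNReal _ (gaussianPDFReal_nonneg 0 1 x), smul_eq_mul]
  rw [pdf01]
  ring

lemma sqrt2pi_pos : 0 < Real.sqrt (2 * π) := Real.sqrt_pos.mpr (by positivity)

lemma M1 : ∫ x, x ^ 1 ∂(gaussianReal 0 1) = 0 := by rw [Mval, J1, mul_zero]
lemma M2 : ∫ x, x ^ 2 ∂(gaussianReal 0 1) = 1 := by
  rw [Mval, J2, inv_mul_cancel₀ sqrt2pi_pos.ne']
lemma M4 : ∫ x, x ^ 4 ∂(gaussianReal 0 1) = 3 := by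
  rw [Mval, J4]
  field_simp

end FGaux


/-- For a fixed row vector `g ∈ ℝ^{1×N}` and a random vector `v ∈ ℝ^N`
with i.i.d. standard normal coordinates, the mean squared error of the single-sample
forward-gradient estimator satisfies `E[‖(g v) vᵀ − g‖²] = (N + 1) ‖g‖²`. -/
theorem forward_gradient_single_sample_mse
    {N : ℕ} (hN : 0 < N)
    {Ω : Type*} [MeasurableSpace Ω] (μ : Measure Ω) [IsProbabilityMeasure μ]
    (g : Fin N → ℝ) (v : Ω → Fin N → ℝ) (hv : Measurable v)
    (hindep : iIndepFun (fun i ω => v ω i) μ)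
    (hgauss : ∀ i : Fin N, Measure.map (fun ω => v ω i) μ = gaussianReal 0 1) :
    ∫ ω, ∑ j : Fin N, ((∑ i : Fin N, g i * v ω i) * v ω j - g j) ^ 2 ∂μ
      = ((N : ℝ) + 1) * ∑ i : Fin N, (g i) ^ 2 := by
  classical
  have hXm : ∀ i, Measurable fun ω => v ω i := fun i => (measurable_pi_apply i).comp hv
  set M : ℕ → ℝ := fun n => ∫ x, x ^ n ∂(gaussianReal 0 1) with hM
  have hM1 : M 1 = 0 := FGaux.M1
  have hM2 : M 2 = 1 := FGaux.M2
  have hM4 : M 4 = 3 := FGaux.M4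
  have hmom : ∀ (i : Fin N) (n : ℕ), ∫ ω, (v ω i) ^ n ∂μ = M n := by
    intro i n
    have hpm : Measurable fun x : ℝ => x ^ n := measurable_id.pow_const n
    show ∫ ω, (v ω i) ^ n ∂μ = ∫ x, x ^ n ∂(gaussianReal 0 1)
    rw [← hgauss i, integral_map (hXm i).aemeasurable hpm.aestronglyMeasurable]
  have hint : ∀ (i : Fin N) (n : ℕ), Integrable (fun ω => (v ω i) ^ n) μ := by
    intro i n
    have h1 : Integrable (fun x : ℝ => x ^ n) (Measure.map (fun ω => v ω i) μ) := by
      rw [hgauss i]; exact FGaux.Mint n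
    have hpm : Measurable fun x : ℝ => x ^ n := measurable_id.pow_const n
    exact (integrable_map_measure hpm.aestronglyMeasurable (hXm i).aemeasurable).mp h1
  have hpairInd : ∀ {i j : Fin N}, i ≠ j → ∀ a b : ℕ,
      IndepFun (fun ω => (v ω i) ^ a) (fun ω => (v ω j) ^ b) μ := by
    intro i j hij a b
    exact (hindep.indepFun hij).comp (measurable_id.pow_const a) (measurable_id.pow_const b)
  have hpairI : ∀ {i j : Fin N}, i ≠ j → ∀ a b : ℕ,
      Integrable (fun ω => (v ω i) ^ a * (v ω j) ^ b) μ := by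
    intro i j hij a b
    exact (hpairInd hij a b).integrable_mul (hint i a) (hint j b)
  have hpairV : ∀ {i j : Fin N}, i ≠ j → ∀ a b : ℕ,
      ∫ ω, (v ω i) ^ a * (v ω j) ^ b ∂μ = M a * M b := by
    intro i j hij a b
    have h := (hpairInd hij a b).integral_mul_eq_mul_integral
      ((hint i a).aestronglyMeasurable) ((hint j b).aestronglyMeasurable)
    rw [← hmom i a, ← hmom j b]
    exact h
  -- triple independence
  have htriple : ∀ {i k j : Fin N}, i ≠ k → j ≠ i → j ≠ k →
      IndepFun (fun ω => v ω i * v ω k) (fun ω => (v ω j) ^ 2) μ := by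
    intro i k j hik hji hjk
    have hcomp : iIndepFun
        (fun l => fun ω => (v ω l) ^ (if l = j then 2 else 1)) μ :=
      hindep.comp (fun l x => x ^ (if l = j then 2 else 1))
        (fun l => measurable_id.pow_const _)
    have h := hcomp.indepFun_finsetProd_of_notMem
      (fun l => (hXm l).pow_const _) (s := {i, k}) (i := j) (by simp [hji, hjk])
    have hprod : (∏ l ∈ ({i, k} : Finset (Fin N)), fun ω => (v ω l) ^ (if l = j then 2 else 1))
        = fun ω => v ω i * v ω k := by
      rw [Finset.prod_pair hik]
      funext ω
      simp [Pi.mul_apply, (hji.symm : i ≠ j), (hjk.symm : k ≠ j)]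
    have hj2 : (fun ω => (v ω j) ^ (if j = j then 2 else 1)) = fun ω => (v ω j) ^ 2 := by
      simp
    rw [hprod, hj2] at h
    exact h
  -- pair values B
  have hBI : ∀ i j : Fin N, Integrable (fun ω => v ω i * v ω j) μ := by
    intro i j
    by_cases hij : i = j
    · subst hij
      exact (hint i 2).congr (Filter.Eventually.of_forall fun ω => by ring)
    · exact (hpairI hij 1 1).congr (Filter.Eventually.of_forall fun ω => by ring)
  have hB : ∀ i j : Fin N, ∫ ω, v ω i * v ω j ∂μ = if i = j then 1 else 0 := by
    intro i j
    by_cases hij : i = j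
    · subst hij
      rw [if_pos rfl, ← hM2, ← hmom i 2]
      exact integral_congr_ae (Filter.Eventually.of_forall fun ω => by ring)
    · rw [if_neg hij]
      have : ∫ ω, v ω i * v ω j ∂μ = ∫ ω, (v ω i) ^ 1 * (v ω j) ^ 1 ∂μ :=
        integral_congr_ae (Filter.Eventually.of_forall fun ω => by ring)
      rw [this, hpairV hij 1 1, hM1, zero_mul]
  -- triple values A
  have hAI : ∀ i k j : Fin N, Integrable (fun ω => v ω i * v ω k * (v ω j) ^ 2) μ := by
    intro i k j
    by_cases hik : i = k
    · subst hik
      by_cases hij : i = j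
      · subst hij
        exact (hint i 4).congr (Filter.Eventually.of_forall fun ω => by ring)
      · exact (hpairI hij 2 2).congr (Filter.Eventually.of_forall fun ω => by ring)
    · by_cases hji : j = i
      · subst hji
        exact (hpairI hik 3 1).congr (Filter.Eventually.of_forall fun ω => by ring)
      · by_cases hjk : j = k
        · subst hjk
          exact (hpairI hik 1 3).congr (Filter.Eventually.of_forall fun ω => by ring)
        · have h := (htriple hik hji hjk).integrable_mul (hBI i k) (hint j 2)
          exact h.congr (Filter.Eventually.of_forall fun ω => by simp [Pi.mul_apply])
  have hA : ∀ i k j : Fin N, ∫ ω, v ω i * v ω k * (v ω j) ^ 2 ∂μ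
      = if i = k then (if i = j then 3 else 1) else 0 := by
    intro i k j
    by_cases hik : i = k
    · subst hik
      rw [if_pos rfl]
      by_cases hij : i = j
      · subst hij
        rw [if_pos rfl, ← hM4, ← hmom i 4]
        exact integral_congr_ae (Filter.Eventually.of_forall fun ω => by ring)
      · rw [if_neg hij]
        have : ∫ ω, v ω i * v ω i * (v ω j) ^ 2 ∂μ = ∫ ω, (v ω i) ^ 2 * (v ω j) ^ 2 ∂μ :=
          integral_congr_ae (Filter.Eventually.of_forall fun ω => by ring)
        rw [this, hpairV hij 2 2, hM2, one_mul]
    · rw [if_neg hik]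
      by_cases hji : j = i
      · subst hji
        have : ∫ ω, v ω j * v ω k * (v ω j) ^ 2 ∂μ = ∫ ω, (v ω j) ^ 3 * (v ω k) ^ 1 ∂μ :=
          integral_congr_ae (Filter.Eventually.of_forall fun ω => by ring)
        rw [this, hpairV hik 3 1, hM1, mul_zero]
      · by_cases hjk : j = k
        · subst hjk
          have : ∫ ω, v ω i * v ω j * (v ω j) ^ 2 ∂μ = ∫ ω, (v ω i) ^ 1 * (v ω j) ^ 3 ∂μ :=
            integral_congr_ae (Filter.Eventually.of_forall fun ω => by ring)
          rw [this, hpairV hik 1 3, hM1, zero_mul]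
        · have h := (htriple hik hji hjk).integral_mul_eq_mul_integral
            ((hBI i k).aestronglyMeasurable) ((hint j 2).aestronglyMeasurable)
          have heq : (fun ω => v ω i * v ω k * (v ω j) ^ 2)
              = ((fun ω => v ω i * v ω k) * fun ω => (v ω j) ^ 2) := rfl
          rw [show (∫ ω, v ω i * v ω k * (v ω j) ^ 2 ∂μ)
              = ∫ ω, ((fun ω => v ω i * v ω k) * fun ω => (v ω j) ^ 2) ω ∂μ from rfl, h,
            hB i k, if_neg hik, zero_mul]
  -- pointwise expansion
  have hpt : ∀ ω, ∑ j : Fin N, ((∑ i : Fin N, g i * v ω i) * v ω j - g j) ^ 2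
      = (∑ j : Fin N, ∑ i : Fin N, ∑ k : Fin N, (g i * g k) * (v ω i * v ω k * (v ω j) ^ 2))
        - 2 * (∑ j : Fin N, ∑ i : Fin N, (g j * g i) * (v ω i * v ω j))
        + (∑ j : Fin N, g j ^ 2) := by
    intro ω
    have hj : ∀ j : Fin N, ((∑ i : Fin N, g i * v ω i) * v ω j - g j) ^ 2
        = (∑ i : Fin N, ∑ k : Fin N, (g i * g k) * (v ω i * v ω k * (v ω j) ^ 2))
          - 2 * (∑ i : Fin N, (g j * g i) * (v ω i * v ω j)) + g j ^ 2 := by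
      intro j
      have e1 : (∑ i : Fin N, g i * v ω i) * (∑ k : Fin N, g k * v ω k) * (v ω j) ^ 2
          = ∑ i : Fin N, ∑ k : Fin N, (g i * g k) * (v ω i * v ω k * (v ω j) ^ 2) := by
        rw [Finset.sum_mul_sum]
        simp only [Finset.sum_mul]
        exact Finset.sum_congr rfl fun i _ => Finset.sum_congr rfl fun k _ => by ring
      have e2 : g j * ((∑ i : Fin N, g i * v ω i) * v ω j)
          = ∑ i : Fin N, (g j * g i) * (v ω i * v ω j) := by
        rw [Finset.sum_mul, Finset.mul_sum]
        exact Finset.sum_congr rfl fun i _ => by ring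
      rw [← e1, ← e2]
      ring
    rw [Finset.sum_congr rfl fun j _ => hj j, Finset.sum_add_distrib, Finset.sum_sub_distrib,
      Finset.mul_sum]
  -- integrability of chunks
  have hT1I : Integrable (fun ω => ∑ j : Fin N, ∑ i : Fin N, ∑ k : Fin N,
      (g i * g k) * (v ω i * v ω k * (v ω j) ^ 2)) μ :=
    integrable_finset_sum _ fun j _ => integrable_finset_sum _ fun i _ =>
      integrable_finset_sum _ fun k _ => (hAI i k j).const_mul _
  have hT2I : Integrable (fun ω => ∑ j : Fin N, ∑ i : Fin N,
      (g j * g i) * (v ω i * v ω j)) μ :=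
    integrable_finset_sum _ fun j _ => integrable_finset_sum _ fun i _ =>
      (hBI i j).const_mul _
  calc ∫ ω, ∑ j : Fin N, ((∑ i : Fin N, g i * v ω i) * v ω j - g j) ^ 2 ∂μ
      = ∫ ω, ((∑ j : Fin N, ∑ i : Fin N, ∑ k : Fin N, (g i * g k) * (v ω i * v ω k * (v ω j) ^ 2))
        - 2 * (∑ j : Fin N, ∑ i : Fin N, (g j * g i) * (v ω i * v ω j))
        + (∑ j : Fin N, g j ^ 2)) ∂μ :=
        integral_congr_ae (Filter.Eventually.of_forall hpt)
    _ = (∫ ω, ∑ j : Fin N, ∑ i : Fin N, ∑ k : Fin N,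
          (g i * g k) * (v ω i * v ω k * (v ω j) ^ 2) ∂μ)
        - 2 * (∫ ω, ∑ j : Fin N, ∑ i : Fin N, (g j * g i) * (v ω i * v ω j) ∂μ)
        + (∑ j : Fin N, g j ^ 2) := by
        have hT2I' : Integrable (fun ω => 2 * ∑ j : Fin N, ∑ i : Fin N,
            (g j * g i) * (v ω i * v ω j)) μ := hT2I.const_mul 2
        have hsub : Integrable (fun ω =>
            (∑ j : Fin N, ∑ i : Fin N, ∑ k : Fin N, (g i * g k) * (v ω i * v ω k * (v ω j) ^ 2))
            - 2 * ∑ j : Fin N, ∑ i : Fin N, (g j * g i) * (v ω i * v ω j)) μ := hT1I.sub hT2I'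
        rw [integral_add hsub (integrable_const _),
          integral_sub hT1I hT2I', integral_const_mul, integral_const]
        simp
    _ = (∑ j : Fin N, ∑ i : Fin N, ∑ k : Fin N,
          (g i * g k) * (if i = k then (if i = j then 3 else 1) else 0))
        - 2 * (∑ j : Fin N, ∑ i : Fin N, (g j * g i) * (if i = j then 1 else 0))
        + (∑ j : Fin N, g j ^ 2) := by
        rw [integral_finset_sum _ fun j _ => integrable_finset_sum _ fun i _ =>
            integrable_finset_sum _ fun k _ => (hAI i k j).const_mul _,
          integral_finset_sum _ fun j _ => integrable_finset_sum _ fun i _ =>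
            (hBI i j).const_mul _]
        congr 2
        · refine Finset.sum_congr rfl fun j _ => ?_
          rw [integral_finset_sum _ fun i _ => integrable_finset_sum _ fun k _ =>
            (hAI i k j).const_mul _]
          refine Finset.sum_congr rfl fun i _ => ?_
          rw [integral_finset_sum _ fun k _ => (hAI i k j).const_mul _]
          refine Finset.sum_congr rfl fun k _ => ?_
          rw [integral_const_mul, hA]
        · congr 1
          refine Finset.sum_congr rfl fun j _ => ?_
          rw [integral_finset_sum _ fun i _ => (hBI i j).const_mul _]
          refine Finset.sum_congr rfl fun i _ => ?_
          rw [integral_const_mul, hB]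
    _ = ((N : ℝ) + 1) * ∑ i : Fin N, (g i) ^ 2 := by
        have h1 : ∀ j : Fin N, (∑ i : Fin N, ∑ k : Fin N,
            (g i * g k) * (if i = k then (if i = j then 3 else 1) else 0))
            = (∑ i : Fin N, g i ^ 2) + 2 * g j ^ 2 := by
          intro j
          have : ∀ i : Fin N, (∑ k : Fin N,
              (g i * g k) * (if i = k then (if i = j then 3 else 1) else 0))
              = g i ^ 2 + (if i = j then 2 * g i ^ 2 else 0) := by
            intro i
            rw [Finset.sum_congr rfl fun k _ => mul_ite (i = k) (g i * g k) _ _]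
            simp only [mul_zero]
            rw [Finset.sum_ite_eq]
            simp only [Finset.mem_univ, if_true]
            split <;> ring
          rw [Finset.sum_congr rfl fun i _ => this i, Finset.sum_add_distrib,
            Finset.sum_ite_eq']
          simp only [Finset.mem_univ, if_true]
        have h2 : ∀ j : Fin N, (∑ i : Fin N, (g j * g i) * (if i = j then 1 else 0))
            = g j ^ 2 := by
          intro j
          rw [Finset.sum_congr rfl fun i _ => mul_ite (i = j) (g j * g i) _ _]
          simp only [mul_zero, mul_one]
          rw [Finset.sum_ite_eq']
          simp only [Finset.mem_univ, if_true]
          ring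
        rw [Finset.sum_congr rfl fun j _ => h1 j, Finset.sum_congr rfl fun j _ => h2 j,
          Finset.sum_add_distrib, Finset.sum_const, Finset.card_univ, Fintype.card_fin,
          nsmul_eq_mul, Finset.mul_sum]
        rw [show (∑ j : Fin N, 2 * g j ^ 2) = 2 * ∑ j : Fin N, g j ^ 2 from
          (Finset.mul_sum _ _ _).symm]
        simp only [← Finset.mul_sum]
        ring
end

section
/- Let p, q, r be positive integers, let G ∈ ℝ^{p×q} be a fixed matrix, and let P ∈ ℝ^{q×r} be a random matrix whose entries are i.i.d. normal N(0, 1/r). Then the mean squared Frobenius error of the low-rank estimator satisfies E[‖G P Pᵀ − G‖²] = ((q+1)/r) ‖G‖², where ‖·‖ denotes the Frobenius norm. -/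
open MeasureTheory ProbabilityTheory Real Matrix
open scoped NNReal ENNReal


lemma aux_pdf_eq (v : ℝ≥0) (x : ℝ) :
    gaussianPDFReal 0 v x = (√(2 * π * v))⁻¹ * rexp (-(((2:ℝ)*v)⁻¹) * x ^ 2) := by
  simp only [gaussianPDFReal, sub_zero]
  congr 1
  ring

lemma aux_pdf_even (v : ℝ≥0) (x : ℝ) : gaussianPDFReal 0 v (-x) = gaussianPDFReal 0 v x := by
  simp [gaussianPDFReal, neg_sq]

lemma aux_integral_gaussianReal (v : ℝ≥0) (hv : v ≠ 0) (f : ℝ → ℝ) (hf : Measurable f) :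
    ∫ x, f x ∂(gaussianReal 0 v) = ∫ x, gaussianPDFReal 0 v x * f x := by
  rw [gaussianReal_of_var_ne_zero 0 hv]
  have h : gaussianPDF 0 v = fun x => ((Real.toNNReal (gaussianPDFReal 0 v x) : ℝ≥0) : ℝ≥0∞) := rfl
  rw [h, integral_withDensity_eq_integral_smul (measurable_gaussianPDFReal 0 v).real_toNNReal f]
  congr 1; funext x
  rw [NNReal.smul_def, smul_eq_mul, Real.coe_toNNReal _ (gaussianPDFReal_nonneg 0 v x)]

lemma aux_integrable_pow_gaussianReal (v : ℝ≥0) (hv : v ≠ 0) (n : ℕ) :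
    Integrable (fun x => x ^ n) (gaussianReal 0 v) := by
  have hvpos : (0:ℝ) < v := lt_of_le_of_ne v.coe_nonneg (by exact_mod_cast hv.symm)
  have hb : (0:ℝ) < ((2:ℝ)*v)⁻¹ := by positivity
  rw [gaussianReal_of_var_ne_zero 0 hv,
    integrable_withDensity_iff (measurable_gaussianPDF 0 v)
      (ae_of_all _ fun x => ENNReal.ofReal_lt_top)]
  have h : (fun x : ℝ => x ^ n * (gaussianPDF 0 v x).toReal)
      = fun x => (√(2 * π * v))⁻¹ * (x ^ n * rexp (-(((2:ℝ)*v)⁻¹) * x ^ 2)) := by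
    funext x
    rw [gaussianPDF, ENNReal.toReal_ofReal (gaussianPDFReal_nonneg 0 v x), aux_pdf_eq]
    ring
  rw [h]
  refine Integrable.const_mul ?_ _
  have h2 := integrable_rpow_mul_exp_neg_mul_sq hb (s := (n:ℝ))
    (by exact_mod_cast neg_one_lt_zero.trans_le (Nat.cast_nonneg n))
  simpa [Real.rpow_natCast] using h2

lemma aux_odd_zero {f : ℝ → ℝ} (hf : ∀ x, f (-x) = - f x) : ∫ x : ℝ, f x = 0 := by
  have h1 : ∫ x : ℝ, f (-x) = ∫ x : ℝ, f x := integral_neg_eq_self f volume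
  have h2 : ∫ x : ℝ, f (-x) = - ∫ x : ℝ, f x := by
    simp_rw [hf]; exact integral_neg f
  linarith

-- ∫ x^2 e^{-bx^2} over ℝ
lemma aux_sq_exp (b : ℝ) (hb : 0 < b) :
    ∫ x : ℝ, x ^ 2 * rexp (-b * x ^ 2) = b ^ (-(3:ℝ)/2) * (√π / 2) := by
  have habs : ∫ x : ℝ, x ^ 2 * rexp (-b * x ^ 2)
      = 2 * ∫ x in Set.Ioi (0:ℝ), x ^ 2 * rexp (-b * x ^ 2) := by
    rw [← integral_comp_abs (f := fun x => x ^ 2 * rexp (-b * x ^ 2))]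
    congr 1; funext x; rw [sq_abs]
  have hIoi : ∫ x in Set.Ioi (0:ℝ), x ^ 2 * rexp (-b * x ^ 2)
      = b ^ (-(3:ℝ)/2) * (1/2) * Gamma (3/2) := by
    have := integral_rpow_mul_exp_neg_mul_rpow (p := 2) (q := 2) two_pos (by norm_num) hb
    simp only [show ((2:ℝ)+1) = 3 by norm_num] at this
    rw [← this]
    refine setIntegral_congr_fun measurableSet_Ioi (fun x hx => ?_)
    norm_cast
  have hG : Gamma (3/2 : ℝ) = √π / 2 := by
    rw [show (3/2 : ℝ) = 1/2 + 1 by norm_num, Gamma_add_one (by norm_num), Gamma_one_half_eq]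
    ring
  rw [habs, hIoi, hG]; ring

lemma aux_quart_exp (b : ℝ) (hb : 0 < b) :
    ∫ x : ℝ, x ^ 4 * rexp (-b * x ^ 2) = b ^ (-(5:ℝ)/2) * (3 * √π / 4) := by
  have habs : ∫ x : ℝ, x ^ 4 * rexp (-b * x ^ 2)
      = 2 * ∫ x in Set.Ioi (0:ℝ), x ^ 4 * rexp (-b * x ^ 2) := by
    rw [← integral_comp_abs (f := fun x => x ^ 4 * rexp (-b * x ^ 2))]
    congr 1; funext x
    rw [show |x| ^ 4 = x ^ 4 by rw [← abs_pow]; exact abs_of_nonneg (by positivity), sq_abs]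
  have hIoi : ∫ x in Set.Ioi (0:ℝ), x ^ 4 * rexp (-b * x ^ 2)
      = b ^ (-(5:ℝ)/2) * (1/2) * Gamma (5/2) := by
    have := integral_rpow_mul_exp_neg_mul_rpow (p := 2) (q := 4) two_pos (by norm_num) hb
    simp only [show ((4:ℝ)+1) = 5 by norm_num] at this
    rw [← this]
    refine setIntegral_congr_fun measurableSet_Ioi (fun x hx => ?_)
    norm_cast
  have hG : Gamma (5/2 : ℝ) = 3 * √π / 4 := by
    rw [show (5/2 : ℝ) = 3/2 + 1 by norm_num, Gamma_add_one (by norm_num),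
        show (3/2 : ℝ) = 1/2 + 1 by norm_num, Gamma_add_one (by norm_num), Gamma_one_half_eq]
    ring
  rw [habs, hIoi, hG]; ring


lemma aux_rpow32 {y : ℝ} (hy : 0 < y) : (y⁻¹) ^ (-(3:ℝ)/2) = y * √y := by
  rw [show -(3:ℝ)/2 = -(3/2) by norm_num, Real.rpow_neg (by positivity),
    Real.inv_rpow hy.le, inv_inv, show (3:ℝ)/2 = 1 + 1/2 by norm_num,
    Real.rpow_add hy, Real.rpow_one, ← Real.sqrt_eq_rpow]

lemma aux_rpow52 {y : ℝ} (hy : 0 < y) : (y⁻¹) ^ (-(5:ℝ)/2) = y ^ 2 * √y := by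
  rw [show -(5:ℝ)/2 = -(5/2) by norm_num, Real.rpow_neg (by positivity),
    Real.inv_rpow hy.le, inv_inv, show (5:ℝ)/2 = 2 + 1/2 by norm_num,
    Real.rpow_add hy, ← Real.sqrt_eq_rpow, show ((2:ℝ):ℝ) = ((2:ℕ):ℝ) by norm_num,
    Real.rpow_natCast]

lemma aux_sqrt_split (v : ℝ≥0) : √(2 * π * (v:ℝ)) = √π * √(2 * v) := by
  rw [show 2 * π * (v:ℝ) = π * (2 * v) by ring, Real.sqrt_mul pi_pos.le]

lemma aux_moment1 (v : ℝ≥0) (hv : v ≠ 0) : ∫ x, x ∂(gaussianReal 0 v) = 0 := by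
  rw [show (fun x : ℝ => x) = fun x : ℝ => x ^ 1 from by funext x; ring] at *
  rw [aux_integral_gaussianReal v hv _ (by fun_prop)]
  exact aux_odd_zero (fun x => by rw [aux_pdf_even]; ring)

lemma aux_moment3 (v : ℝ≥0) (hv : v ≠ 0) : ∫ x, x ^ 3 ∂(gaussianReal 0 v) = 0 := by
  rw [aux_integral_gaussianReal v hv _ (by fun_prop)]
  exact aux_odd_zero (fun x => by rw [aux_pdf_even]; ring)

lemma aux_moment2 (v : ℝ≥0) (hv : v ≠ 0) : ∫ x, x ^ 2 ∂(gaussianReal 0 v) = v := by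
  have hvpos : (0:ℝ) < v := lt_of_le_of_ne v.coe_nonneg (by exact_mod_cast hv.symm)
  have hb : (0:ℝ) < ((2:ℝ)*v)⁻¹ := by positivity
  rw [aux_integral_gaussianReal v hv _ (by fun_prop)]
  have h : (fun x : ℝ => gaussianPDFReal 0 v x * x ^ 2)
      = fun x : ℝ => (√(2 * π * v))⁻¹ * (x ^ 2 * rexp (-(((2:ℝ)*v)⁻¹) * x ^ 2)) := by
    funext x; rw [aux_pdf_eq]; ring
  rw [h, MeasureTheory.integral_const_mul, aux_sq_exp _ hb, aux_rpow32 (by positivity),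
    aux_sqrt_split]
  have h1 : √π ≠ 0 := by positivity
  have h2 : √(2 * (v:ℝ)) ≠ 0 := by positivity
  field_simp

lemma aux_moment4 (v : ℝ≥0) (hv : v ≠ 0) : ∫ x, x ^ 4 ∂(gaussianReal 0 v) = 3 * v ^ 2 := by
  have hvpos : (0:ℝ) < v := lt_of_le_of_ne v.coe_nonneg (by exact_mod_cast hv.symm)
  have hb : (0:ℝ) < ((2:ℝ)*v)⁻¹ := by positivity
  rw [aux_integral_gaussianReal v hv _ (by fun_prop)]
  have h : (fun x : ℝ => gaussianPDFReal 0 v x * x ^ 4)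
      = fun x : ℝ => (√(2 * π * v))⁻¹ * (x ^ 4 * rexp (-(((2:ℝ)*v)⁻¹) * x ^ 2)) := by
    funext x; rw [aux_pdf_eq]; ring
  rw [h, MeasureTheory.integral_const_mul, aux_quart_exp _ hb, aux_rpow52 (by positivity),
    aux_sqrt_split]
  have h1 : √π ≠ 0 := by positivity
  have h2 : √(2 * (v:ℝ)) ≠ 0 := by positivity
  field_simp
  ring


lemma amgm4 (w x y z : ℝ) : |w*x*y*z| ≤ (w^4+x^4+y^4+z^4)/4 := by
  have h1 : |w*x*y*z| = |w| * |x| * |y| * |z| := by rw [abs_mul, abs_mul, abs_mul]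
  nlinarith [sq_nonneg (|w| * |x| - |y| * |z|), sq_nonneg (|w| - |x|), sq_nonneg (|y| - |z|),
    abs_nonneg w, abs_nonneg x, abs_nonneg y, abs_nonneg z, sq_abs w, sq_abs x, sq_abs y,
    sq_abs z, sq_nonneg (w^2 - x^2), sq_nonneg (y^2-z^2), mul_nonneg (abs_nonneg w) (abs_nonneg x),
    mul_nonneg (abs_nonneg y) (abs_nonneg z), sq_nonneg (|w| * |x|), sq_nonneg (|y| * |z|)]

lemma amgm2 (w x : ℝ) : |w*x| ≤ (w^2+x^2)/2 := by
  have h1 : |w*x| = |w| * |x| := abs_mul w x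
  nlinarith [sq_nonneg (|w| - |x|), sq_abs w, sq_abs x, abs_nonneg w, abs_nonneg x]

section prob
variable {Ω : Type*} [MeasurableSpace Ω] {μ : Measure Ω} [IsProbabilityMeasure μ] {v : ℝ≥0}

lemma aux_int_pow_eq {X : Ω → ℝ} (hX : Measurable X)
    (hg : Measure.map X μ = gaussianReal 0 v) (n : ℕ) :
    ∫ ω, (X ω) ^ n ∂μ = ∫ x, x ^ n ∂(gaussianReal 0 v) := by
  rw [← hg, integral_map hX.aemeasurable ((measurable_id'.pow_const n).aestronglyMeasurable)]

lemma aux_integrable_pow (hv : v ≠ 0) {X : Ω → ℝ} (hX : Measurable X)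
    (hg : Measure.map X μ = gaussianReal 0 v) (n : ℕ) :
    Integrable (fun ω => (X ω) ^ n) μ := by
  have h := aux_integrable_pow_gaussianReal v hv n
  rw [← hg] at h
  exact (integrable_map_measure ((measurable_id'.pow_const n).aestronglyMeasurable) hX.aemeasurable).mp h

variable {ι : Type*} {X : ι → Ω → ℝ}

lemma aux_int2 (hv : v ≠ 0) (hmeas : ∀ i, Measurable (X i))
    (hmap : ∀ i, Measure.map (X i) μ = gaussianReal 0 v) (a b : ι) :
    Integrable (fun ω => X a ω * X b ω) μ := by
  refine Integrable.mono' (g := fun ω => (X a ω ^ 2 + X b ω ^ 2)/2)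
    (((aux_integrable_pow hv (hmeas a) (hmap a) 2).add
      (aux_integrable_pow hv (hmeas b) (hmap b) 2)).div_const 2)
    (((hmeas a).mul (hmeas b)).aestronglyMeasurable)
    (ae_of_all _ fun ω => ?_)
  simpa [abs_mul] using amgm2 (X a ω) (X b ω)

lemma aux_int4 (hv : v ≠ 0) (hmeas : ∀ i, Measurable (X i))
    (hmap : ∀ i, Measure.map (X i) μ = gaussianReal 0 v) (a b c d : ι) :
    Integrable (fun ω => X a ω * X b ω * X c ω * X d ω) μ := by
  refine Integrable.mono'
    (g := fun ω => (X a ω ^ 4 + X b ω ^ 4 + X c ω ^ 4 + X d ω ^ 4)/4)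
    ((((aux_integrable_pow hv (hmeas a) (hmap a) 4).add
        (aux_integrable_pow hv (hmeas b) (hmap b) 4)).add
       ((aux_integrable_pow hv (hmeas c) (hmap c) 4)) |>.add
       (aux_integrable_pow hv (hmeas d) (hmap d) 4)).div_const 4)
    ((((hmeas a).mul (hmeas b)).mul ((hmeas c))).mul (hmeas d) |>.aestronglyMeasurable)
    (ae_of_all _ fun ω => ?_)
  simpa [abs_mul] using amgm4 (X a ω) (X b ω) (X c ω) (X d ω)

lemma aux_E_pow_mul_pow (hmeas : ∀ i, Measurable (X i))
    (hind : iIndepFun X μ) {a b : ι} (hab : a ≠ b) (m n : ℕ)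
    (hm : Integrable (fun ω => X a ω ^ m) μ) (hn : Integrable (fun ω => X b ω ^ n) μ) :
    ∫ ω, X a ω ^ m * X b ω ^ n ∂μ = (∫ ω, X a ω ^ m ∂μ) * (∫ ω, X b ω ^ n ∂μ) := by
  have hI : IndepFun (fun ω => X a ω ^ m) (fun ω => X b ω ^ n) μ :=
    (hind.indepFun hab).comp (measurable_id.pow_const m) (measurable_id'.pow_const n)
  exact hI.integral_fun_mul_eq_mul_integral hm.aestronglyMeasurable hn.aestronglyMeasurable

end prob

section prob2
variable {Ω : Type*} [MeasurableSpace Ω] {μ : Measure Ω} [IsProbabilityMeasure μ] {v : ℝ≥0}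
variable {ι : Type*} [DecidableEq ι] {X : ι → Ω → ℝ}


variable (hv : v ≠ 0) (hmeas : ∀ i, Measurable (X i))
  (hind : iIndepFun X μ)
  (hmap : ∀ i, Measure.map (X i) μ = gaussianReal 0 v)

include hv hmeas hmap

lemma aux_EX (a : ι) : ∫ ω, X a ω ∂μ = 0 := by
  have h := aux_int_pow_eq (hmeas a) (hmap a) 1
  simp only [pow_one] at h
  rw [h, aux_moment1 v hv]

lemma aux_EX2 (a : ι) : ∫ ω, X a ω ^ 2 ∂μ = (v:ℝ) := by
  rw [aux_int_pow_eq (hmeas a) (hmap a) 2, aux_moment2 v hv]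

lemma aux_EX3 (a : ι) : ∫ ω, X a ω ^ 3 ∂μ = 0 := by
  rw [aux_int_pow_eq (hmeas a) (hmap a) 3, aux_moment3 v hv]

lemma aux_EX4 (a : ι) : ∫ ω, X a ω ^ 4 ∂μ = 3 * (v:ℝ) ^ 2 := by
  rw [aux_int_pow_eq (hmeas a) (hmap a) 4, aux_moment4 v hv]

lemma aux_intX (a : ι) : Integrable (X a) μ := by
  have h := aux_integrable_pow hv (hmeas a) (hmap a) 1
  simpa only [pow_one] using h

include hind

lemma aux_E2 (a b : ι) :
    ∫ ω, X a ω * X b ω ∂μ = if a = b then (v:ℝ) else 0 := by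
  by_cases hab : a = b
  · subst hab
    simp only [if_pos rfl, ← pow_two]
    exact aux_EX2 hv hmeas hmap a
  · rw [if_neg hab]
    have h := aux_E_pow_mul_pow hmeas hind hab 1 1
      (by simpa only [pow_one] using aux_intX hv hmeas hmap a)
      (by simpa only [pow_one] using aux_intX hv hmeas hmap b)
    simp only [pow_one] at h
    rw [h, aux_EX hv hmeas hmap a, zero_mul]

lemma aux_E22 {a b : ι} (hab : a ≠ b) :
    ∫ ω, X a ω ^ 2 * X b ω ^ 2 ∂μ = (v:ℝ) ^ 2 := by
  rw [aux_E_pow_mul_pow hmeas hind hab 2 2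
      (aux_integrable_pow hv (hmeas a) (hmap a) 2)
      (aux_integrable_pow hv (hmeas b) (hmap b) 2),
    aux_EX2 hv hmeas hmap a, aux_EX2 hv hmeas hmap b, sq]

lemma aux_E31 {a b : ι} (hab : a ≠ b) :
    ∫ ω, X a ω ^ 3 * X b ω ∂μ = 0 := by
  have h := aux_E_pow_mul_pow hmeas hind hab 3 1
    (aux_integrable_pow hv (hmeas a) (hmap a) 3)
    (by simpa only [pow_one] using aux_intX hv hmeas hmap b)
  simp only [pow_one] at h
  rw [h, aux_EX3 hv hmeas hmap a, zero_mul]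

lemma aux_E112 {a b c : ι} (hba : b ≠ a) (hca : c ≠ a) (hbc : b ≠ c) :
    ∫ ω, X b ω * X c ω ^ 2 * X a ω ∂μ = 0 := by
  have hIbc : IndepFun (X b) (fun ω => X c ω ^ 2) μ :=
    (hind.indepFun hbc).comp measurable_id (measurable_id'.pow_const 2)
  have hint : Integrable (fun ω => X b ω * X c ω ^ 2) μ :=
    hIbc.integrable_mul (aux_intX hv hmeas hmap b)
      (aux_integrable_pow hv (hmeas c) (hmap c) 2)
  have hI : IndepFun (fun ω => X b ω * X c ω ^ 2) (X a) μ :=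
    ((hind.indepFun_prodMk hmeas b c a hba hca).comp
      (measurable_fst.mul (measurable_snd.pow_const 2)) measurable_id)
  have h := hI.integral_mul_eq_mul_integral hint.aestronglyMeasurable (aux_intX hv hmeas hmap a).aestronglyMeasurable
  rw [show ((fun ω => X b ω * X c ω ^ 2) * X a) = fun ω => X b ω * X c ω ^ 2 * X a ω from rfl] at h
  rw [h, aux_EX hv hmeas hmap a, mul_zero]

lemma aux_Epp {a b c d : ι} (hac : a ≠ c) (had : a ≠ d) (hbc : b ≠ c) (hbd : b ≠ d) :
    ∫ ω, (X a ω * X b ω) * (X c ω * X d ω) ∂μ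
      = (∫ ω, X a ω * X b ω ∂μ) * (∫ ω, X c ω * X d ω ∂μ) := by
  have hI : IndepFun (fun ω => X a ω * X b ω) (fun ω => X c ω * X d ω) μ :=
    (hind.indepFun_prodMk_prodMk hmeas a b c d hac had hbc hbd).comp
      (measurable_fst.mul measurable_snd) (measurable_fst.mul measurable_snd)
  exact hI.integral_fun_mul_eq_mul_integral (aux_int2 hv hmeas hmap a b).aestronglyMeasurable (aux_int2 hv hmeas hmap c d).aestronglyMeasurable

end prob2

lemma aux_sum_ite_diag {n : ℕ} (A B : ℝ) :
    ∑ t : Fin n, ∑ s : Fin n, (if t = s then A else B)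
      = (n:ℝ) * A + ((n:ℝ)^2 - n) * B := by
  have h1 : ∀ t : Fin n, ∑ s : Fin n, (if t = s then A else B) = A + ((n:ℝ) - 1) * B := by
    intro t
    have h : ∀ s : Fin n, (if t = s then A else B) = B + (if t = s then A - B else 0) := by
      intro s; split_ifs <;> ring
    simp_rw [h]
    rw [Finset.sum_add_distrib, Finset.sum_ite_eq, Finset.sum_const, Finset.card_univ,
      Fintype.card_fin, if_pos (Finset.mem_univ t), nsmul_eq_mul]
    ring
  simp_rw [h1]
  rw [Finset.sum_const, Finset.card_univ, Fintype.card_fin, nsmul_eq_mul]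
  ring

/-- For a fixed matrix `G ∈ ℝ^{p×q}` and a random matrix `P ∈ ℝ^{q×r}`
with i.i.d. `N(0, 1/r)` entries, the mean squared Frobenius error of the low-rank
estimator satisfies `E[‖G P Pᵀ − G‖²] = ((q+1)/r) ‖G‖²`. -/
theorem low_rank_projection_mse
    {p q r : ℕ} (hp : 0 < p) (hq : 0 < q) (hr : 0 < r)
    {Ω : Type*} [MeasurableSpace Ω] (μ : Measure Ω) [IsProbabilityMeasure μ]
    (G : Matrix (Fin p) (Fin q) ℝ)
    (P : Ω → Matrix (Fin q) (Fin r) ℝ) (hP : ∀ ij : Fin q × Fin r, Measurable (fun ω => P ω ij.1 ij.2))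
    (hindep : iIndepFun
      (fun ij : Fin q × Fin r => fun ω => P ω ij.1 ij.2) μ)
    (hgauss : ∀ ij : Fin q × Fin r,
      Measure.map (fun ω => P ω ij.1 ij.2) μ = gaussianReal 0 (r : NNReal)⁻¹) :
    ∫ ω, ∑ i : Fin p, ∑ j : Fin q, ((G * P ω * (P ω)ᵀ) i j - G i j) ^ 2 ∂μ
      = (((q : ℝ) + 1) / (r : ℝ)) * ∑ i : Fin p, ∑ j : Fin q, (G i j) ^ 2 := by
  classical
  have hrne : ((r:ℝ)) ≠ 0 := Nat.cast_ne_zero.mpr hr.ne'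
  set v : ℝ≥0 := (r : ℝ≥0)⁻¹ with hvdef
  have hv : v ≠ 0 := by
    simp only [hvdef, ne_eq, inv_eq_zero, Nat.cast_eq_zero]
    exact hr.ne'
  have hVr : (v:ℝ) = (r:ℝ)⁻¹ := by
    rw [hvdef, NNReal.coe_inv, NNReal.coe_natCast]
  set X : Fin q × Fin r → Ω → ℝ := fun a ω => P ω a.1 a.2 with hXdef
  have hmeas : ∀ a, Measurable (X a) := fun a => hP a
  have hmap : ∀ a, Measure.map (X a) μ = gaussianReal 0 v := fun a => hgauss a
  have hind : iIndepFun X μ := hindep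
  set S : Fin q → Fin q → Ω → ℝ := fun k j ω => ∑ t, X (k,t) ω * X (j,t) ω with hSdef
  set d : Fin q → Fin q → ℝ := fun k j => if k = j then (1:ℝ) else 0 with hddef
  -- integrability of S
  have hSint : ∀ k j, Integrable (S k j) μ := fun k j =>
    integrable_finset_sum _ (fun t _ => aux_int2 hv hmeas hmap _ _)
  -- mean of S
  have hES : ∀ k j, ∫ ω, S k j ω ∂μ = d k j := by
    intro k j
    rw [show (fun ω => S k j ω) = fun ω => ∑ t, X (k,t) ω * X (j,t) ω from rfl,
      integral_finset_sum _ (fun t _ => aux_int2 hv hmeas hmap _ _)]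
    have he : ∀ t : Fin r, ∫ ω, X (k,t) ω * X (j,t) ω ∂μ = if k = j then (v:ℝ) else 0 := by
      intro t
      rw [aux_E2 hv hmeas hind hmap]
      by_cases hkj : k = j <;> simp [hkj, Prod.ext_iff]
    simp_rw [he]
    rw [Finset.sum_const, Finset.card_univ, Fintype.card_fin, nsmul_eq_mul, hddef]
    by_cases hkj : k = j <;> simp [hkj, hVr] <;> field_simp
  -- product of S integrable
  have hSprod : ∀ k j l, (fun ω => S k j ω * S l j ω)
      = fun ω => ∑ t, ∑ s, (X (k,t) ω * X (j,t) ω) * (X (l,s) ω * X (j,s) ω) := by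
    intro k j l; funext ω; exact Finset.sum_mul_sum _ _ _ _
  have hSSint : ∀ k j l, Integrable (fun ω => S k j ω * S l j ω) μ := by
    intro k j l
    rw [hSprod]
    exact integrable_finset_sum _ (fun t _ => integrable_finset_sum _ (fun s _ => by
      simpa [mul_assoc] using aux_int4 hv hmeas hmap (k,t) (j,t) (l,s) (j,s)))
  -- fourth-moment table
  have hE4 : ∀ (k j l : Fin q) (t s : Fin r),
      ∫ ω, (X (k,t) ω * X (j,t) ω) * (X (l,s) ω * X (j,s) ω) ∂μ
        = if t = s then (if k = l then (1 + (if k = j then (2:ℝ) else 0)) * (v:ℝ)^2 else 0)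
          else (if k = j then (v:ℝ) else 0) * (if l = j then (v:ℝ) else 0) := by
    intro k j l t s
    by_cases hts : t = s
    · subst hts
      rw [if_pos rfl]
      by_cases hkl : k = l
      · subst hkl
        rw [if_pos rfl]
        by_cases hkj : k = j
        · subst hkj
          have hfun : (fun ω => (X (k,t) ω * X (k,t) ω) * (X (k,t) ω * X (k,t) ω))
              = fun ω => X (k,t) ω ^ 4 := by funext ω; ring
          rw [hfun, aux_EX4 hv hmeas hmap]
          norm_num
        · have hfun : (fun ω => (X (k,t) ω * X (j,t) ω) * (X (k,t) ω * X (j,t) ω))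
              = fun ω => X (k,t) ω ^ 2 * X (j,t) ω ^ 2 := by funext ω; ring
          rw [hfun, aux_E22 hv hmeas hind hmap (by simp [Prod.ext_iff, hkj])]
          simp [hkj]
      · rw [if_neg hkl]
        by_cases hkj : k = j
        · subst hkj
          have hfun : (fun ω => (X (k,t) ω * X (k,t) ω) * (X (l,t) ω * X (k,t) ω))
              = fun ω => X (k,t) ω ^ 3 * X (l,t) ω := by funext ω; ring
          rw [hfun, aux_E31 hv hmeas hind hmap (by simp [Prod.ext_iff, hkl])]
        · by_cases hlj : l = j
          · subst hlj
            have hfun : (fun ω => (X (k,t) ω * X (l,t) ω) * (X (l,t) ω * X (l,t) ω))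
                = fun ω => X (l,t) ω ^ 3 * X (k,t) ω := by funext ω; ring
            rw [hfun, aux_E31 hv hmeas hind hmap
              (by simp [Prod.ext_iff]; exact fun h => hkj h.symm)]
          · have hfun : (fun ω => (X (k,t) ω * X (j,t) ω) * (X (l,t) ω * X (j,t) ω))
                = fun ω => X (k,t) ω * X (j,t) ω ^ 2 * X (l,t) ω := by funext ω; ring
            rw [hfun, aux_E112 hv hmeas hind hmap
              (show ((k,t) : Fin q × Fin r) ≠ (l,t) by simp [Prod.ext_iff, hkl])
              (show ((j,t) : Fin q × Fin r) ≠ (l,t) by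
                simp [Prod.ext_iff]; exact fun h => hlj h.symm)
              (show ((k,t) : Fin q × Fin r) ≠ (j,t) by simp [Prod.ext_iff, hkj])]
    · rw [if_neg hts]
      rw [aux_Epp hv hmeas hind hmap
        (show ((k,t) : Fin q × Fin r) ≠ (l,s) by simp [Prod.ext_iff, hts])
        (show ((k,t) : Fin q × Fin r) ≠ (j,s) by simp [Prod.ext_iff, hts])
        (show ((j,t) : Fin q × Fin r) ≠ (l,s) by simp [Prod.ext_iff, hts])
        (show ((j,t) : Fin q × Fin r) ≠ (j,s) by simp [Prod.ext_iff, hts]),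
        aux_E2 hv hmeas hind hmap, aux_E2 hv hmeas hind hmap]
      by_cases hkj : k = j <;> by_cases hlj : l = j <;>
        simp [hkj, hlj, Prod.ext_iff]
  -- second moment of S products
  have hESS : ∀ (k j l : Fin q), ∫ ω, S k j ω * S l j ω ∂μ
      = (r:ℝ) * (if k = l then (1 + (if k = j then (2:ℝ) else 0)) * (v:ℝ)^2 else 0)
        + ((r:ℝ)^2 - r) * ((if k = j then (v:ℝ) else 0) * (if l = j then (v:ℝ) else 0)) := by
    intro k j l
    rw [hSprod]
    rw [integral_finset_sum _ (fun t _ => integrable_finset_sum _ (fun s _ => by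
      simpa [mul_assoc] using aux_int4 hv hmeas hmap (k,t) (j,t) (l,s) (j,s)))]
    refine Eq.trans (Finset.sum_congr rfl fun t _ =>
      integral_finset_sum _ (fun s _ => by
        simpa [mul_assoc] using aux_int4 hv hmeas hmap (k,t) (j,t) (l,s) (j,s))) ?_
    simp_rw [hE4 k j l]
    exact aux_sum_ite_diag _ _
  -- covariance values
  have hDDint : ∀ j k l, Integrable (fun ω => (S k j ω - d k j) * (S l j ω - d l j)) μ := by
    intro j k l
    have h := (((hSSint k j l).sub ((hSint l j).const_mul (d k j))).sub
      ((hSint k j).const_mul (d l j))).add (integrable_const (d k j * d l j))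
    refine h.congr (ae_of_all _ fun ω => ?_)
    simp only [Pi.add_apply, Pi.sub_apply]
    ring
  have hEDD : ∀ j k l, ∫ ω, (S k j ω - d k j) * (S l j ω - d l j) ∂μ
      = (if k = l then (1 + (if k = j then (2:ℝ) else 0)) * (v:ℝ) else 0)
        - d k j * d l j * (v:ℝ) := by
    intro j k l
    have hfun : (fun ω => (S k j ω - d k j) * (S l j ω - d l j))
        = fun ω => (S k j ω * S l j ω - d k j * S l j ω - d l j * S k j ω) + d k j * d l j := by
      funext ω; ring
    rw [hfun]
    have h1 : Integrable (fun ω => S k j ω * S l j ω - d k j * S l j ω - d l j * S k j ω) μ :=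
      ((hSSint k j l).sub ((hSint l j).const_mul (d k j))).sub ((hSint k j).const_mul (d l j))
    have h2 : Integrable (fun ω => S k j ω * S l j ω - d k j * S l j ω) μ :=
      (hSSint k j l).sub ((hSint l j).const_mul (d k j))
    rw [integral_add h1 (integrable_const _),
      integral_sub h2 ((hSint k j).const_mul (d l j)),
      integral_sub (hSSint k j l) ((hSint l j).const_mul (d k j)),
      MeasureTheory.integral_const_mul, MeasureTheory.integral_const_mul, integral_const,
      probReal_univ, one_smul, hES, hES, hESS]
    rw [hddef]
    simp only [hVr]
    split_ifs <;> field_simp <;> ring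
  -- pointwise expansion of the squared error
  have hentry : ∀ ω (i : Fin p) (j : Fin q),
      (G * P ω * (P ω)ᵀ) i j - G i j = ∑ k, G i k * (S k j ω - d k j) := by
    intro ω i j
    have h1 : (G * P ω * (P ω)ᵀ) i j = ∑ k, G i k * S k j ω := by
      rw [Matrix.mul_apply]
      simp_rw [Matrix.mul_apply, Matrix.transpose_apply, Finset.sum_mul]
      rw [Finset.sum_comm]
      refine Finset.sum_congr rfl fun k _ => ?_
      rw [show S k j = fun ω => ∑ t, X (k,t) ω * X (j,t) ω from rfl]
      simp only [hXdef]
      rw [Finset.mul_sum]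
      exact Finset.sum_congr rfl fun t _ => by ring
    have h2 : G i j = ∑ k, G i k * d k j := by
      rw [hddef]
      simp [mul_ite, Finset.sum_ite_eq']
    calc (G * P ω * (P ω)ᵀ) i j - G i j
        = (∑ k, G i k * S k j ω) - ∑ k, G i k * d k j := by rw [h1, ← h2]
      _ = ∑ k, G i k * (S k j ω - d k j) := by
          rw [← Finset.sum_sub_distrib]
          exact Finset.sum_congr rfl fun k _ => (mul_sub _ _ _).symm
  have hsq : ∀ ω (i : Fin p) (j : Fin q),
      ((G * P ω * (P ω)ᵀ) i j - G i j) ^ 2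
        = ∑ k, ∑ l, (G i k * G i l) * ((S k j ω - d k j) * (S l j ω - d l j)) := by
    intro ω i j
    rw [hentry, pow_two, Finset.sum_mul_sum]
    exact Finset.sum_congr rfl fun k _ => Finset.sum_congr rfl fun l _ => by ring
  have hrw : (fun ω => ∑ i : Fin p, ∑ j : Fin q, ((G * P ω * (P ω)ᵀ) i j - G i j) ^ 2)
      = fun ω => ∑ i : Fin p, ∑ j : Fin q, ∑ k, ∑ l,
          (G i k * G i l) * ((S k j ω - d k j) * (S l j ω - d l j)) := by
    funext ω
    exact Finset.sum_congr rfl fun i _ => Finset.sum_congr rfl fun j _ => hsq ω i j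
  rw [hrw]
  have hTint : ∀ (i : Fin p) (j k l : Fin q),
      Integrable (fun ω => (G i k * G i l) * ((S k j ω - d k j) * (S l j ω - d l j))) μ :=
    fun i j k l => (hDDint j k l).const_mul _
  rw [integral_finset_sum _ (fun i _ => integrable_finset_sum _ fun j _ =>
    integrable_finset_sum _ fun k _ => integrable_finset_sum _ fun l _ => hTint i j k l)]
  calc ∑ i : Fin p, ∫ ω, ∑ j : Fin q, ∑ k, ∑ l,
        (G i k * G i l) * ((S k j ω - d k j) * (S l j ω - d l j)) ∂μ
      = ∑ i : Fin p, ∑ j : Fin q, ∑ k, ∑ l,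
        ∫ ω, (G i k * G i l) * ((S k j ω - d k j) * (S l j ω - d l j)) ∂μ := by
        refine Finset.sum_congr rfl fun i _ => ?_
        rw [integral_finset_sum _ (fun j _ => integrable_finset_sum _ fun k _ =>
          integrable_finset_sum _ fun l _ => hTint i j k l)]
        refine Finset.sum_congr rfl fun j _ => ?_
        rw [integral_finset_sum _ (fun k _ => integrable_finset_sum _ fun l _ => hTint i j k l)]
        refine Finset.sum_congr rfl fun k _ => ?_
        exact integral_finset_sum _ (fun l _ => hTint i j k l)
    _ = ∑ i : Fin p, ∑ j : Fin q, ∑ k, ∑ l, (G i k * G i l) *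
          ((if k = l then (1 + (if k = j then (2:ℝ) else 0)) * (v:ℝ) else 0)
            - d k j * d l j * (v:ℝ)) := by
        simp_rw [MeasureTheory.integral_const_mul, hEDD]
    _ = ∑ i : Fin p, ∑ j : Fin q, ((∑ k, G i k ^ 2) * (v:ℝ) + G i j ^ 2 * (v:ℝ)) := by
        refine Finset.sum_congr rfl fun i _ => Finset.sum_congr rfl fun j _ => ?_
        have h1 : ∀ k : Fin q, ∑ l, (G i k * G i l) *
            ((if k = l then (1 + (if k = j then (2:ℝ) else 0)) * (v:ℝ) else 0)
              - d k j * d l j * (v:ℝ))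
            = G i k ^ 2 * ((1 + (if k = j then (2:ℝ) else 0)) * (v:ℝ))
              - (if k = j then G i k * G i j * (v:ℝ) else 0) := by
          intro k
          have h : ∀ l : Fin q, (G i k * G i l) *
              ((if k = l then (1 + (if k = j then (2:ℝ) else 0)) * (v:ℝ) else 0)
                - d k j * d l j * (v:ℝ))
              = (if k = l then G i k * G i l * ((1 + (if k = j then (2:ℝ) else 0)) * (v:ℝ)) else 0)
                - (if l = j then (if k = j then G i k * G i l * (v:ℝ) else 0) else 0) := by
            intro l
            rw [hddef]
            by_cases h1 : k = l <;> by_cases h2 : k = j <;> by_cases h3 : l = j <;>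
              simp [h1, h2, h3] <;> ring
          simp_rw [h]
          rw [Finset.sum_sub_distrib, Finset.sum_ite_eq, Finset.sum_ite_eq']
          simp [pow_two]
        simp_rw [h1]
        rw [Finset.sum_sub_distrib, Finset.sum_ite_eq']
        have h2 : ∀ k : Fin q, G i k ^ 2 * ((1 + (if k = j then (2:ℝ) else 0)) * (v:ℝ))
            = G i k ^ 2 * (v:ℝ) + (if k = j then G i k ^ 2 * (2 * (v:ℝ)) else 0) := by
          intro k; by_cases hkj : k = j <;> simp [hkj] <;> ring
        simp_rw [h2]
        rw [Finset.sum_add_distrib, Finset.sum_ite_eq', ← Finset.sum_mul]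
        simp [pow_two]
        ring
    _ = (((q : ℝ) + 1) / (r : ℝ)) * ∑ i : Fin p, ∑ j : Fin q, (G i j) ^ 2 := by
        have hrow : ∀ i : Fin p, ∑ j : Fin q, ((∑ k, G i k ^ 2) * (v:ℝ) + G i j ^ 2 * (v:ℝ))
            = (((q : ℝ) + 1) / (r : ℝ)) * ∑ j : Fin q, G i j ^ 2 := by
          intro i
          rw [Finset.sum_add_distrib, Finset.sum_const, Finset.card_univ, Fintype.card_fin,
            nsmul_eq_mul, ← Finset.sum_mul, hVr]
          field_simp
        simp_rw [hrow]
        rw [Finset.mul_sum]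
end

section
/- Let p, q, r be positive integers, let G ∈ ℝ^{p×q} be a fixed matrix, and let P ∈ ℝ^{q×r} be a random matrix whose entries are i.i.d. normal N(0, 1/r). Then E[‖G P Pᵀ‖²] = (1 + (q+1)/r) ‖G‖², where ‖·‖ denotes the Frobenius norm. -/
open MeasureTheory ProbabilityTheory Real Matrix

open scoped NNReal ENNReal
open Filter

namespace LowRankAux


lemma integrable_pow_mul_gauss {b : ℝ} (hb : 0 < b) (n : ℕ) :
    Integrable fun x : ℝ => x ^ n * rexp (-b * x ^ 2) := by
  have h := integrable_rpow_mul_exp_neg_mul_sq hb (s := (n : ℝ))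
    (by exact_mod_cast neg_one_lt_zero.trans_le (Nat.cast_nonneg n))
  simpa [Real.rpow_natCast] using h

lemma tendsto_pow_mul_gauss_atTop {b : ℝ} (hb : 0 < b) (n : ℕ) :
    Tendsto (fun x : ℝ => x ^ n * rexp (-b * x ^ 2)) atTop (nhds 0) := by
  have h := rpow_mul_exp_neg_mul_sq_isLittleO_exp_neg hb (n : ℝ)
  have h2 : Tendsto (fun x : ℝ => rexp (-(1/2) * x)) atTop (nhds 0) := by
    apply Real.tendsto_exp_atBot.comp
    apply Tendsto.const_mul_atTop_of_neg (by norm_num : -(1/2 : ℝ) < 0) tendsto_id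
  have h3 := h.trans_tendsto h2
  have : (fun x : ℝ => x ^ (n:ℝ) * rexp (-b * x ^ 2)) =ᶠ[atTop]
      (fun x : ℝ => x ^ n * rexp (-b * x ^ 2)) := by
    filter_upwards with x
    rw [Real.rpow_natCast]
  exact h3.congr' this

lemma tendsto_pow_mul_gauss_atBot {b : ℝ} (hb : 0 < b) (n : ℕ) :
    Tendsto (fun x : ℝ => x ^ n * rexp (-b * x ^ 2)) atBot (nhds 0) := by
  have h3 : Tendsto (fun x : ℝ => (-1:ℝ)^n * ((-x)^n * rexp (-b * (-x) ^ 2))) atBot (nhds 0) := by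
    have := ((tendsto_pow_mul_gauss_atTop hb n).comp tendsto_neg_atBot_atTop).const_mul ((-1:ℝ)^n)
    simpa using this
  apply h3.congr
  intro x
  rw [neg_sq]
  ring_nf
  rw [pow_mul']
  norm_num

lemma gauss_rec {b : ℝ} (hb : 0 < b) (m : ℕ) :
    ∫ x : ℝ, x ^ (m + 2) * rexp (-b * x ^ 2)
      = ((m : ℝ) + 1) / (2 * b) * ∫ x : ℝ, x ^ m * rexp (-b * x ^ 2) := by
  set f : ℝ → ℝ := fun x => x ^ (m+1) * rexp (-b * x^2) with hf
  set F : ℝ → ℝ := fun x => ((m:ℝ)+1) * (x ^ m * rexp (-b * x^2))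
      - (2*b) * (x^(m+2) * rexp (-b*x^2)) with hF
  have hderiv : ∀ x : ℝ, HasDerivAt f (F x) x := by
    intro x
    have h1 : HasDerivAt (fun x : ℝ => x ^ (m+1)) (((m:ℝ)+1) * x ^ m) x := by
      simpa using hasDerivAt_pow (m+1) x
    have h2 : HasDerivAt (fun x : ℝ => rexp (-b * x^2)) (rexp (-b*x^2) * (-b * (2*x))) x := by
      have h : HasDerivAt (fun x : ℝ => -b * x^2) (-b * (2*x)) x := by
        simpa using (hasDerivAt_pow 2 x).const_mul (-b)
      exact h.exp
    have h := h1.mul h2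
    refine h.congr_deriv ?_
    simp only [hF]
    ring
  have hint : ∀ k : ℕ, Integrable fun x : ℝ => x ^ k * rexp (-b * x^2) :=
    fun k => integrable_pow_mul_gauss hb k
  have hFint : Integrable F := ((hint m).const_mul _).sub ((hint (m+2)).const_mul _)
  have htop : Tendsto f atTop (nhds 0) := tendsto_pow_mul_gauss_atTop hb (m+1)
  have hbot : Tendsto f atBot (nhds 0) := tendsto_pow_mul_gauss_atBot hb (m+1)
  have hIoi : ∫ x in Set.Ioi (0:ℝ), F x = 0 - f 0 :=
    integral_Ioi_of_hasDerivAt_of_tendsto' (fun x _ => hderiv x) hFint.integrableOn htop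
  have hIic : ∫ x in Set.Iic (0:ℝ), F x = f 0 - 0 :=
    integral_Iic_of_hasDerivAt_of_tendsto' (fun x _ => hderiv x) hFint.integrableOn hbot
  have htot : ∫ x : ℝ, F x = 0 := by
    rw [← intervalIntegral.integral_Iic_add_Ioi hFint.integrableOn hFint.integrableOn, hIoi, hIic]; ring
  have hexp : ∫ x : ℝ, F x = ((m:ℝ)+1) * (∫ x : ℝ, x ^ m * rexp (-b*x^2))
      - (2*b) * ∫ x : ℝ, x^(m+2) * rexp (-b*x^2) := by
    simp only [hF]
    rw [integral_sub ((hint m).const_mul _) ((hint (m+2)).const_mul _),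
      integral_const_mul, integral_const_mul]
  rw [hexp] at htot
  have h2b : (2*b) ≠ 0 := by positivity
  rw [div_mul_eq_mul_div, eq_div_iff h2b]
  linarith [htot]




lemma pdf_eq (v : ℝ≥0) (x : ℝ) :
    gaussianPDFReal 0 v x = (√(2*π*v))⁻¹ * rexp (-(2*(v:ℝ))⁻¹ * x^2) := by
  rw [gaussianPDFReal, sub_zero, show -x^2/(2*(v:ℝ)) = -(2*(v:ℝ))⁻¹ * x^2 by ring]

lemma integral_gaussianReal_eq (v : ℝ≥0) (hv : v ≠ 0) (g : ℝ → ℝ) :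
    ∫ x, g x ∂(gaussianReal 0 v) = ∫ x, gaussianPDFReal 0 v x * g x := by
  rw [gaussianReal_of_var_ne_zero 0 hv]
  have h : (gaussianPDF 0 v) = fun x => ((Real.toNNReal (gaussianPDFReal 0 v x) : ℝ≥0) : ℝ≥0∞) := rfl
  rw [h, integral_withDensity_eq_integral_smul
    ((measurable_gaussianPDFReal 0 v).real_toNNReal) g]
  congr 1 with x
  simp [NNReal.smul_def, Real.coe_toNNReal _ (gaussianPDFReal_nonneg 0 v x)]

lemma gauss_moment_pdf (v : ℝ≥0) (hv : v ≠ 0) (n : ℕ) :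
    ∫ x, x ^ n ∂(gaussianReal 0 v)
      = (√(2*π*v))⁻¹ * ∫ x : ℝ, x ^ n * rexp (-(2*(v:ℝ))⁻¹ * x^2) := by
  rw [integral_gaussianReal_eq v hv, ← integral_const_mul]
  congr 1 with x
  rw [pdf_eq]
  ring

lemma gauss_CJ (v : ℝ≥0) (hv : v ≠ 0) :
    (√(2*π*v))⁻¹ * ∫ x : ℝ, x ^ (0:ℕ) * rexp (-(2*(v:ℝ))⁻¹ * x^2) = 1 := by
  rw [← gauss_moment_pdf v hv 0]
  simp

lemma vpos (v : ℝ≥0) (hv : v ≠ 0) : (0:ℝ) < (v:ℝ) := by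
  exact_mod_cast pos_iff_ne_zero.mpr hv

lemma gauss_moment_two (v : ℝ≥0) (hv : v ≠ 0) :
    ∫ x, x ^ (2:ℕ) ∂(gaussianReal 0 v) = (v : ℝ) := by
  have hv' := vpos v hv
  have hb : 0 < (2*(v:ℝ))⁻¹ := by positivity
  rw [gauss_moment_pdf v hv 2]
  have h2 : (∫ x : ℝ, x^(2:ℕ)*rexp (-(2*(v:ℝ))⁻¹*x^2))
      = (((0:ℕ):ℝ)+1)/(2*(2*(v:ℝ))⁻¹) * ∫ x : ℝ, x^(0:ℕ)*rexp (-(2*(v:ℝ))⁻¹*x^2) :=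
    gauss_rec hb 0
  have hCJ := gauss_CJ v hv
  rw [h2, show (√(2*π*v))⁻¹ * ((((0:ℕ):ℝ)+1)/(2*(2*(v:ℝ))⁻¹)
        * ∫ x : ℝ, x^(0:ℕ)*rexp (-(2*(v:ℝ))⁻¹*x^2))
      = ((((0:ℕ):ℝ)+1)/(2*(2*(v:ℝ))⁻¹))
        * ((√(2*π*v))⁻¹ * ∫ x : ℝ, x^(0:ℕ)*rexp (-(2*(v:ℝ))⁻¹*x^2)) by ring, hCJ]
  push_cast
  rw [mul_one]
  field_simp
  norm_num

lemma gauss_moment_four (v : ℝ≥0) (hv : v ≠ 0) :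
    ∫ x, x ^ (4:ℕ) ∂(gaussianReal 0 v) = 3 * (v : ℝ)^2 := by
  have hv' := vpos v hv
  have hb : 0 < (2*(v:ℝ))⁻¹ := by positivity
  rw [gauss_moment_pdf v hv 4]
  have h2 : (∫ x : ℝ, x^(2:ℕ)*rexp (-(2*(v:ℝ))⁻¹*x^2))
      = (((0:ℕ):ℝ)+1)/(2*(2*(v:ℝ))⁻¹) * ∫ x : ℝ, x^(0:ℕ)*rexp (-(2*(v:ℝ))⁻¹*x^2) :=
    gauss_rec hb 0
  have h4 : (∫ x : ℝ, x^(4:ℕ)*rexp (-(2*(v:ℝ))⁻¹*x^2))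
      = (((2:ℕ):ℝ)+1)/(2*(2*(v:ℝ))⁻¹) * ∫ x : ℝ, x^(2:ℕ)*rexp (-(2*(v:ℝ))⁻¹*x^2) :=
    gauss_rec hb 2
  have hCJ := gauss_CJ v hv
  rw [h4, h2, show (√(2*π*v))⁻¹ * ((((2:ℕ):ℝ)+1)/(2*(2*(v:ℝ))⁻¹)
        * ((((0:ℕ):ℝ)+1)/(2*(2*(v:ℝ))⁻¹) * ∫ x : ℝ, x^(0:ℕ)*rexp (-(2*(v:ℝ))⁻¹*x^2)))
      = ((((2:ℕ):ℝ)+1)/(2*(2*(v:ℝ))⁻¹)) * ((((0:ℕ):ℝ)+1)/(2*(2*(v:ℝ))⁻¹))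
        * ((√(2*π*v))⁻¹ * ∫ x : ℝ, x^(0:ℕ)*rexp (-(2*(v:ℝ))⁻¹*x^2)) by ring, hCJ]
  push_cast
  rw [mul_one]
  field_simp
  ring

lemma gauss_moment_odd (v : ℝ≥0) {n : ℕ} (hn : Odd n) :
    ∫ x, x ^ n ∂(gaussianReal 0 v) = 0 := by
  have hmap : (gaussianReal 0 v).map (fun x => (-1 : ℝ) * x) = gaussianReal 0 v := by
    rw [gaussianReal_map_const_mul (-1)]
    have h1 : (⟨(-1:ℝ)^2, sq_nonneg _⟩ : ℝ≥0) = 1 := by ext; norm_num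
    rw [mul_zero]; congr 1; ext; simp
  have key : ∫ x, x ^ n ∂(gaussianReal 0 v)
      = ∫ x, ((-1:ℝ) * x) ^ n ∂(gaussianReal 0 v) := by
    conv_lhs => rw [← hmap]
    rw [integral_map (by fun_prop) (by fun_prop)]
  have : ∫ x, ((-1:ℝ) * x) ^ n ∂(gaussianReal 0 v) = - ∫ x, x ^ n ∂(gaussianReal 0 v) := by
    rw [← integral_neg]
    congr 1 with x
    rw [neg_one_mul, hn.neg_pow]
  rw [this] at key
  linarith

lemma integrable_pow_gaussianReal (v : ℝ≥0) (hv : v ≠ 0) (n : ℕ) :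
    Integrable (fun x : ℝ => x ^ n) (gaussianReal 0 v) := by
  have hv' := vpos v hv
  have hb : 0 < (2*(v:ℝ))⁻¹ := by positivity
  rw [gaussianReal_of_var_ne_zero 0 hv]
  rw [integrable_withDensity_iff (measurable_gaussianPDF 0 v)
    (ae_of_all _ fun x => ENNReal.ofReal_lt_top)]
  have h : ∀ x : ℝ, x ^ n * (gaussianPDF 0 v x).toReal
      = (√(2*π*v))⁻¹ * (x ^ n * rexp (-(2*(v:ℝ))⁻¹ * x^2)) := by
    intro x
    rw [gaussianPDF, ENNReal.toReal_ofReal (gaussianPDFReal_nonneg 0 v x), pdf_eq]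
    ring
  rw [show (fun x : ℝ => x ^ n * (gaussianPDF 0 v x).toReal)
      = fun x : ℝ => (√(2*π*v))⁻¹ * (x ^ n * rexp (-(2*(v:ℝ))⁻¹ * x^2)) from funext h]
  exact (integrable_pow_mul_gauss hb n).const_mul _



def lrIdx {q r : ℕ} (k j l : Fin q) (s t : Fin r) (a : Fin q × Fin r) : ℕ :=
  (if a = (k,s) then 1 else 0) + (if a = (j,s) then 1 else 0)
  + (if a = (l,t) then 1 else 0) + (if a = (j,t) then 1 else 0)

lemma prod_pow_lrIdx {q r : ℕ} (k j l : Fin q) (s t : Fin r) (X : Fin q × Fin r → ℝ) :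
    X (k,s) * X (j,s) * (X (l,t) * X (j,t))
      = ∏ a : Fin q × Fin r, X a ^ (lrIdx k j l s t a) := by
  have hb : ∀ b : Fin q × Fin r,
      (∏ a : Fin q × Fin r, X a ^ (if a = b then 1 else 0)) = X b := by
    intro b
    rw [Finset.prod_eq_single b (fun c _ hc => by simp [hc]) (by simp)]
    simp
  simp only [lrIdx, pow_add, Finset.prod_mul_distrib, hb]
  ring

lemma prod_two {ι : Type*} [Fintype ι] [DecidableEq ι] (f : ι → ℝ) (b₁ b₂ : ι)
    (hne : b₁ ≠ b₂) (h1 : ∀ c, c ≠ b₁ → c ≠ b₂ → f c = 1) :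
    ∏ a : ι, f a = f b₁ * f b₂ := by
  rw [← Finset.prod_pair hne]
  refine (Finset.prod_subset (Finset.subset_univ _) ?_).symm
  intro c _ hc
  simp only [Finset.mem_insert, Finset.mem_singleton] at hc
  push_neg at hc
  exact h1 c hc.1 hc.2

lemma prod_gm_lrIdx {q r : ℕ} (gm : ℕ → ℝ) (V : ℝ) (h0 : gm 0 = 1) (h1 : gm 1 = 0)
    (h2 : gm 2 = V) (h4 : gm 4 = 3*V^2) (k j l : Fin q) (s t : Fin r) :
    ∏ a : Fin q × Fin r, gm (lrIdx k j l s t a)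
      = if k = l ∧ s = t then (if k = j then 3*V^2 else V^2)
        else if k = j ∧ l = j ∧ s ≠ t then V^2 else 0 := by
  classical
  by_cases hst : s = t
  · subst hst
    by_cases hkl : k = l
    · subst hkl
      by_cases hkj : k = j
      · subst hkj
        rw [Finset.prod_eq_single (k,s)
          (fun c _ hc => by simp [lrIdx, hc, h0]) (by simp)]
        simp [lrIdx, h4]
      · rw [prod_two _ (k,s) (j,s) (by simp [Prod.ext_iff, hkj])
          (fun c hc1 hc2 => by simp [lrIdx, hc1, hc2, h0])]
        simp [lrIdx, hkj, Ne.symm hkj, Prod.ext_iff, h2, sq]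
    · by_cases hkj : k = j
      · subst hkj
        have hlk : l ≠ k := fun h => hkl h.symm
        rw [Finset.prod_eq_zero (Finset.mem_univ ((l,s) : Fin q × Fin r))]
        · simp [hkl]
        · have : lrIdx k k l s s (l,s) = 1 := by
            simp [lrIdx, Prod.ext_iff, hlk]
          rw [this, h1]
      · rw [Finset.prod_eq_zero (Finset.mem_univ ((k,s) : Fin q × Fin r))]
        · simp [hkl, hkj]
        · have : lrIdx k j l s s (k,s) = 1 := by
            simp [lrIdx, Prod.ext_iff, hkj, hkl]
          rw [this, h1]
  · by_cases hkj : k = j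
    · subst hkj
      by_cases hlj : l = k
      · subst hlj
        rw [prod_two _ (l,s) (l,t) (by simp [Prod.ext_iff, hst])
          (fun c hc1 hc2 => by simp [lrIdx, hc1, hc2, h0])]
        simp [lrIdx, hst, Ne.symm hst, Prod.ext_iff, h2, sq]
      · rw [Finset.prod_eq_zero (Finset.mem_univ ((l,t) : Fin q × Fin r))]
        · simp [hst, hlj]
        · have : lrIdx k k l s t (l,t) = 1 := by
            simp [lrIdx, Prod.ext_iff, hlj, hst, Ne.symm hst]
          rw [this, h1]
    · rw [Finset.prod_eq_zero (Finset.mem_univ ((k,s) : Fin q × Fin r))]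
      · simp [hst, hkj]
      · have : lrIdx k j l s t (k,s) = 1 := by
          simp [lrIdx, Prod.ext_iff, hkj, hst]
        rw [this, h1]



variable {Ω : Type*} [MeasurableSpace Ω] {μ : Measure Ω} [IsProbabilityMeasure μ]

lemma integral_indep_prod {ι : Type*} {Y : ι → Ω → ℝ} (hY : ∀ i, Measurable (Y i))
    (hindep : iIndepFun Y μ) (s : Finset ι) :
    ∫ ω, ∏ i ∈ s, Y i ω ∂μ = ∏ i ∈ s, ∫ ω, Y i ω ∂μ := by
  classical
  induction s using Finset.cons_induction with
  | empty => simp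
  | cons i s hi ih =>
    have hip : IndepFun (Y i) (∏ j ∈ s, Y j) μ :=
      (hindep.indepFun_finsetProd_of_notMem hY hi).symm
    have hpm : AEStronglyMeasurable (∏ j ∈ s, Y j) μ := by
      rw [Finset.prod_fn]
      exact (Finset.measurable_prod s (fun j _ => hY j)).aestronglyMeasurable
    have hmul := hip.integral_mul_eq_mul_integral (hY i).aestronglyMeasurable hpm
    have happ : ∀ ω, (Y i * ∏ j ∈ s, Y j) ω = Y i ω * ∏ j ∈ s, Y j ω := by
      intro ω; simp [Finset.prod_apply]
    calc ∫ ω, ∏ j ∈ Finset.cons i s hi, Y j ω ∂μ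
        = ∫ ω, (Y i * ∏ j ∈ s, Y j) ω ∂μ := by
          refine integral_congr_ae (ae_of_all _ fun ω => ?_)
          simp [happ, Finset.prod_insert hi]
      _ = (∫ ω, Y i ω ∂μ) * ∫ ω, (∏ j ∈ s, Y j) ω ∂μ := hmul
      _ = ∏ j ∈ Finset.cons i s hi, ∫ ω, Y j ω ∂μ := by
          rw [Finset.prod_cons, ← ih]
          congr 1
          refine integral_congr_ae (ae_of_all _ fun ω => ?_)
          simp [Finset.prod_apply]

lemma integrable_indep_prod {ι : Type*} {Y : ι → Ω → ℝ} (hY : ∀ i, Measurable (Y i))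
    (hint : ∀ i, Integrable (Y i) μ)
    (hindep : iIndepFun Y μ) (s : Finset ι) :
    Integrable (fun ω => ∏ i ∈ s, Y i ω) μ := by
  classical
  induction s using Finset.cons_induction with
  | empty => simp
  | cons i s hi ih =>
    have hip : IndepFun (Y i) (∏ j ∈ s, Y j) μ :=
      (hindep.indepFun_finsetProd_of_notMem hY hi).symm
    have hprodint : Integrable (∏ j ∈ s, Y j) μ := by
      refine ih.congr (ae_of_all _ fun ω => ?_)
      simp [Finset.prod_apply]
    have := hip.integrable_mul (hint i) hprodint
    refine this.congr (ae_of_all _ fun ω => ?_)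
    simp [Finset.prod_apply, Finset.prod_insert hi]

lemma sum_ite_diag (r : ℕ) (A B : ℝ) :
    ∑ s : Fin r, ∑ t : Fin r, (if s = t then A else B)
      = (r:ℝ) * A + ((r:ℝ)^2 - (r:ℝ)) * B := by
  have h : ∀ s t : Fin r, (if s = t then A else B) = B + (if s = t then A - B else 0) := by
    intro s t; by_cases h : s = t <;> simp [h]
  simp_rw [h, Finset.sum_add_distrib, Finset.sum_ite_eq, Finset.sum_const, Finset.mem_univ,
    if_true, Finset.card_univ, Fintype.card_fin, nsmul_eq_mul]
  rw [Finset.sum_const, Finset.card_univ, Fintype.card_fin, nsmul_eq_mul]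
  ring


end LowRankAux

/-- For a fixed matrix `G ∈ ℝ^{p×q}` and a random matrix `P ∈ ℝ^{q×r}`
with i.i.d. `N(0, 1/r)` entries, `E[‖G P Pᵀ‖²] = (1 + (q+1)/r) ‖G‖²` (Frobenius norm). -/
theorem low_rank_projection_second_moment
    {p q r : ℕ} (hp : 0 < p) (hq : 0 < q) (hr : 0 < r)
    {Ω : Type*} [MeasurableSpace Ω] (μ : Measure Ω) [IsProbabilityMeasure μ]
    (G : Matrix (Fin p) (Fin q) ℝ)
    (P : Ω → Matrix (Fin q) (Fin r) ℝ) (hP : ∀ ij : Fin q × Fin r, Measurable (fun ω => P ω ij.1 ij.2))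
    (hindep : iIndepFun
      (fun ij : Fin q × Fin r => fun ω => P ω ij.1 ij.2) μ)
    (hgauss : ∀ ij : Fin q × Fin r,
      Measure.map (fun ω => P ω ij.1 ij.2) μ = gaussianReal 0 (r : NNReal)⁻¹) :
    ∫ ω, ∑ i : Fin p, ∑ j : Fin q, ((G * P ω * (P ω)ᵀ) i j) ^ 2 ∂μ
      = (1 + ((q : ℝ) + 1) / (r : ℝ)) * ∑ i : Fin p, ∑ j : Fin q, (G i j) ^ 2 := by
  classical
  have hrne : r ≠ 0 := hr.ne'
  have hv : ((r : ℝ≥0))⁻¹ ≠ 0 := by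
    simp [Nat.cast_ne_zero.mpr hrne]
  have hrR : (r:ℝ) ≠ 0 := Nat.cast_ne_zero.mpr hrne
  -- moments of the entries
  have hmom : ∀ (a : Fin q × Fin r) (n : ℕ),
      ∫ ω, (P ω a.1 a.2)^n ∂μ = ∫ x, x^n ∂(gaussianReal 0 (r : ℝ≥0)⁻¹) := by
    intro a n
    rw [← hgauss a]
    exact (integral_map (hP a).aemeasurable
      ((measurable_id.pow_const n)).aestronglyMeasurable).symm
  have hIntpow : ∀ (a : Fin q × Fin r) (n : ℕ),
      Integrable (fun ω => (P ω a.1 a.2)^n) μ := by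
    intro a n
    have h1 : Integrable (fun x : ℝ => x^n) (Measure.map (fun ω => P ω a.1 a.2) μ) := by
      rw [hgauss a]
      exact LowRankAux.integrable_pow_gaussianReal _ hv n
    exact (integrable_map_measure (measurable_id.pow_const n).aestronglyMeasurable
      (hP a).aemeasurable).mp h1
  obtain ⟨V, hgm2, hgm4, hVr⟩ : ∃ V : ℝ,
      (∫ x, x^(2:ℕ) ∂(gaussianReal 0 (r : ℝ≥0)⁻¹)) = V
      ∧ (∫ x, x^(4:ℕ) ∂(gaussianReal 0 (r : ℝ≥0)⁻¹)) = 3*V^2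
      ∧ V = (r:ℝ)⁻¹ :=
    ⟨(((r : ℝ≥0))⁻¹ : ℝ), LowRankAux.gauss_moment_two _ hv,
      LowRankAux.gauss_moment_four _ hv, by push_cast; ring⟩
  have hgm0 : ∫ x, x^(0:ℕ) ∂(gaussianReal 0 (r : ℝ≥0)⁻¹) = 1 := by simp
  have hgm1 : ∫ x, x^(1:ℕ) ∂(gaussianReal 0 (r : ℝ≥0)⁻¹) = 0 :=
    LowRankAux.gauss_moment_odd _ odd_one
  -- expectation of a monomial in the entries
  have hkey : ∀ e : Fin q × Fin r → ℕ,
      ∫ ω, ∏ a : Fin q × Fin r, (P ω a.1 a.2)^(e a) ∂μ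
        = ∏ a : Fin q × Fin r, ∫ x, x^(e a) ∂(gaussianReal 0 (r : ℝ≥0)⁻¹) := by
    intro e
    have hYind : iIndepFun
        (fun (a : Fin q × Fin r) (ω : Ω) => (P ω a.1 a.2)^(e a)) μ :=
      hindep.comp (fun a (x : ℝ) => x^(e a)) (fun a => measurable_id.pow_const (e a))
    rw [LowRankAux.integral_indep_prod (fun a => (hP a).pow_const (e a)) hYind Finset.univ]
    exact Finset.prod_congr rfl fun a _ => hmom a (e a)
  have hMonInt : ∀ e : Fin q × Fin r → ℕ,
      Integrable (fun ω => ∏ a : Fin q × Fin r, (P ω a.1 a.2)^(e a)) μ :=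
    fun e => LowRankAux.integrable_indep_prod (fun a => (hP a).pow_const (e a))
      (fun a => hIntpow a (e a))
      (hindep.comp (fun a (x : ℝ) => x^(e a)) (fun a => measurable_id.pow_const (e a)))
      Finset.univ
  have hmon : ∀ (k j l : Fin q) (s t : Fin r) (ω : Ω),
      P ω k s * P ω j s * (P ω l t * P ω j t)
        = ∏ a : Fin q × Fin r, (P ω a.1 a.2)^(LowRankAux.lrIdx k j l s t a) :=
    fun k j l s t ω => LowRankAux.prod_pow_lrIdx k j l s t (fun a => P ω a.1 a.2)
  have hE4 : ∀ (k j l : Fin q) (s t : Fin r),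
      ∫ ω, P ω k s * P ω j s * (P ω l t * P ω j t) ∂μ
        = if k = l ∧ s = t then (if k = j then 3*V^2 else V^2)
          else if k = j ∧ l = j ∧ s ≠ t then V^2 else 0 := by
    intro k j l s t
    calc ∫ ω, P ω k s * P ω j s * (P ω l t * P ω j t) ∂μ
        = ∫ ω, ∏ a : Fin q × Fin r, (P ω a.1 a.2)^(LowRankAux.lrIdx k j l s t a) ∂μ :=
          integral_congr_ae (ae_of_all _ (hmon k j l s t))
      _ = ∏ a : Fin q × Fin r, ∫ x, x^(LowRankAux.lrIdx k j l s t a)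
            ∂(gaussianReal 0 (r : ℝ≥0)⁻¹) := hkey _
      _ = _ := LowRankAux.prod_gm_lrIdx
            (fun n => ∫ x, x^n ∂(gaussianReal 0 (r : ℝ≥0)⁻¹)) V hgm0 hgm1 hgm2 hgm4 k j l s t
  have hTermInt : ∀ (i : Fin p) (j k l : Fin q) (s t : Fin r),
      Integrable (fun ω => G i k * G i l * (P ω k s * P ω j s * (P ω l t * P ω j t))) μ := by
    intro i j k l s t
    have h := (hMonInt (LowRankAux.lrIdx k j l s t)).const_mul (G i k * G i l)
    refine h.congr (ae_of_all _ fun ω => ?_)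
    exact congrArg (fun z => G i k * G i l * z) (hmon k j l s t ω).symm
  -- expansion of the Frobenius norm
  have hexpand : ∀ ω : Ω, (∑ i : Fin p, ∑ j : Fin q, ((G * P ω * (P ω)ᵀ) i j)^2)
      = ∑ i : Fin p, ∑ j : Fin q, ∑ s : Fin r, ∑ t : Fin r, ∑ k : Fin q, ∑ l : Fin q,
          G i k * G i l * (P ω k s * P ω j s * (P ω l t * P ω j t)) := by
    intro ω
    refine Finset.sum_congr rfl fun i _ => Finset.sum_congr rfl fun j _ => ?_
    have hentry : (G * P ω * (P ω)ᵀ) i j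
        = ∑ s : Fin r, (∑ k : Fin q, G i k * P ω k s) * P ω j s := by
      simp [Matrix.mul_apply, Matrix.transpose_apply]
    rw [hentry, sq, Finset.sum_mul_sum]
    refine Finset.sum_congr rfl fun s _ => Finset.sum_congr rfl fun t _ => ?_
    calc (∑ k : Fin q, G i k * P ω k s) * P ω j s * ((∑ l : Fin q, G i l * P ω l t) * P ω j t)
        = (∑ k : Fin q, G i k * P ω k s) * (∑ l : Fin q, G i l * P ω l t)
            * (P ω j s * P ω j t) := by ring
      _ = (∑ k : Fin q, ∑ l : Fin q, (G i k * P ω k s) * (G i l * P ω l t))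
            * (P ω j s * P ω j t) := by rw [Finset.sum_mul_sum]
      _ = ∑ k : Fin q, ∑ l : Fin q,
            G i k * G i l * (P ω k s * P ω j s * (P ω l t * P ω j t)) := by
          rw [Finset.sum_mul]
          refine Finset.sum_congr rfl fun k _ => ?_
          rw [Finset.sum_mul]
          refine Finset.sum_congr rfl fun l _ => ?_
          ring
  -- integrability chains
  have hInt1 : ∀ (i : Fin p) (j : Fin q) (s t : Fin r) (k : Fin q),
      Integrable (fun ω => ∑ l : Fin q,
        G i k * G i l * (P ω k s * P ω j s * (P ω l t * P ω j t))) μ :=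
    fun i j s t k => integrable_finset_sum _ fun l _ => hTermInt i j k l s t
  have hInt2 : ∀ (i : Fin p) (j : Fin q) (s t : Fin r),
      Integrable (fun ω => ∑ k : Fin q, ∑ l : Fin q,
        G i k * G i l * (P ω k s * P ω j s * (P ω l t * P ω j t))) μ :=
    fun i j s t => integrable_finset_sum _ fun k _ => hInt1 i j s t k
  have hInt3 : ∀ (i : Fin p) (j : Fin q) (s : Fin r),
      Integrable (fun ω => ∑ t : Fin r, ∑ k : Fin q, ∑ l : Fin q,
        G i k * G i l * (P ω k s * P ω j s * (P ω l t * P ω j t))) μ :=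
    fun i j s => integrable_finset_sum _ fun t _ => hInt2 i j s t
  have hInt4 : ∀ (i : Fin p) (j : Fin q),
      Integrable (fun ω => ∑ s : Fin r, ∑ t : Fin r, ∑ k : Fin q, ∑ l : Fin q,
        G i k * G i l * (P ω k s * P ω j s * (P ω l t * P ω j t))) μ :=
    fun i j => integrable_finset_sum _ fun s _ => hInt3 i j s
  have hInt5 : ∀ (i : Fin p),
      Integrable (fun ω => ∑ j : Fin q, ∑ s : Fin r, ∑ t : Fin r, ∑ k : Fin q, ∑ l : Fin q,
        G i k * G i l * (P ω k s * P ω j s * (P ω l t * P ω j t))) μ :=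
    fun i => integrable_finset_sum _ fun j _ => hInt4 i j
  -- the inner double sum over k, l
  have hstep1 : ∀ (i : Fin p) (j : Fin q) (s t : Fin r),
      (∑ k : Fin q, ∑ l : Fin q, G i k * G i l *
        (if k = l ∧ s = t then (if k = j then 3*V^2 else V^2)
         else if k = j ∧ l = j ∧ s ≠ t then V^2 else 0))
      = if s = t then (V^2 * ∑ k : Fin q, G i k^2 + 2*V^2 * G i j^2)
        else V^2 * G i j^2 := by
    intro i j s t
    by_cases hst : s = t
    · simp only [hst, and_true, ne_eq, not_true_eq_false, and_false, if_false, if_true,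
        eq_self_iff_true]
      have hin : ∀ k : Fin q,
          (∑ l : Fin q, G i k * G i l * (if k = l then (if k = j then 3*V^2 else V^2) else 0))
          = G i k * G i k * (if k = j then 3*V^2 else V^2) := by
        intro k
        rw [Finset.sum_eq_single k (fun c _ hck => by simp [Ne.symm hck]) (by simp)]
        simp
      rw [Finset.sum_congr rfl fun k _ => hin k]
      have hpt : ∀ k : Fin q, G i k * G i k * (if k = j then 3*V^2 else V^2)
          = G i k^2 * V^2 + (if k = j then G i k^2 * (2*V^2) else 0) := by
        intro k; split_ifs <;> ring
      rw [Finset.sum_congr rfl fun k _ => hpt k, Finset.sum_add_distrib,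
        Finset.sum_ite_eq' Finset.univ j (fun k => G i k^2 * (2*V^2))]
      simp only [Finset.mem_univ, if_true]
      rw [← Finset.sum_mul]
      ring
    · simp only [hst, and_false, if_false, ne_eq, not_false_eq_true, and_true]
      have hin : ∀ k : Fin q,
          (∑ l : Fin q, G i k * G i l * (if k = j ∧ l = j then V^2 else 0))
          = if k = j then G i k * G i j * V^2 else 0 := by
        intro k
        by_cases hk : k = j
        · simp only [hk, true_and, if_true, eq_self_iff_true]
          rw [Finset.sum_eq_single j (fun c _ hc => by simp [hc]) (by simp)]
          simp
        · simp [hk]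
      rw [Finset.sum_congr rfl fun k _ => hin k, Finset.sum_ite_eq' Finset.univ j
        (fun k => G i k * G i j * V^2)]
      simp only [Finset.mem_univ, if_true]
      ring
  -- main computation
  calc ∫ ω, ∑ i : Fin p, ∑ j : Fin q, ((G * P ω * (P ω)ᵀ) i j)^2 ∂μ
      = ∫ ω, ∑ i : Fin p, ∑ j : Fin q, ∑ s : Fin r, ∑ t : Fin r, ∑ k : Fin q, ∑ l : Fin q,
          G i k * G i l * (P ω k s * P ω j s * (P ω l t * P ω j t)) ∂μ :=
        integral_congr_ae (ae_of_all _ hexpand)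
    _ = ∑ i : Fin p, ∑ j : Fin q, ∑ s : Fin r, ∑ t : Fin r, ∑ k : Fin q, ∑ l : Fin q,
          G i k * G i l *
            (if k = l ∧ s = t then (if k = j then 3*V^2 else V^2)
             else if k = j ∧ l = j ∧ s ≠ t then V^2 else 0) := by
        rw [integral_finset_sum _ (fun i _ => hInt5 i)]
        refine Finset.sum_congr rfl fun i _ => ?_
        rw [integral_finset_sum _ (fun j _ => hInt4 i j)]
        refine Finset.sum_congr rfl fun j _ => ?_
        rw [integral_finset_sum _ (fun s _ => hInt3 i j s)]
        refine Finset.sum_congr rfl fun s _ => ?_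
        rw [integral_finset_sum _ (fun t _ => hInt2 i j s t)]
        refine Finset.sum_congr rfl fun t _ => ?_
        rw [integral_finset_sum _ (fun k _ => hInt1 i j s t k)]
        refine Finset.sum_congr rfl fun k _ => ?_
        rw [integral_finset_sum _ (fun l _ => hTermInt i j k l s t)]
        refine Finset.sum_congr rfl fun l _ => ?_
        rw [integral_const_mul, hE4 k j l s t]
    _ = ∑ i : Fin p, ∑ j : Fin q, ∑ s : Fin r, ∑ t : Fin r,
          (if s = t then (V^2 * ∑ k : Fin q, G i k^2 + 2*V^2 * G i j^2)
           else V^2 * G i j^2) := by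
        refine Finset.sum_congr rfl fun i _ => Finset.sum_congr rfl fun j _ =>
          Finset.sum_congr rfl fun s _ => Finset.sum_congr rfl fun t _ => ?_
        exact hstep1 i j s t
    _ = ∑ i : Fin p, ∑ j : Fin q,
          ((r:ℝ) * (V^2 * ∑ k : Fin q, G i k^2 + 2*V^2 * G i j^2)
            + ((r:ℝ)^2 - (r:ℝ)) * (V^2 * G i j^2)) := by
        refine Finset.sum_congr rfl fun i _ => Finset.sum_congr rfl fun j _ => ?_
        exact LowRankAux.sum_ite_diag r _ _
    _ = (1 + ((q:ℝ) + 1) / (r:ℝ)) * ∑ i : Fin p, ∑ j : Fin q, (G i j)^2 := by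
        rw [Finset.mul_sum]
        refine Finset.sum_congr rfl fun i _ => ?_
        have hpt : ∀ j : Fin q,
            (r:ℝ) * (V^2 * ∑ k : Fin q, G i k^2 + 2*V^2 * G i j^2)
              + ((r:ℝ)^2 - (r:ℝ)) * (V^2 * G i j^2)
            = (r:ℝ) * V^2 * (∑ k : Fin q, G i k^2)
              + (2*(r:ℝ)*V^2 + ((r:ℝ)^2 - (r:ℝ))*V^2) * G i j^2 := by
          intro j; ring
        rw [Finset.sum_congr rfl fun j _ => hpt j, Finset.sum_add_distrib, Finset.sum_const,
          Finset.card_univ, Fintype.card_fin, nsmul_eq_mul, ← Finset.mul_sum]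
        rw [hVr]
        field_simp
        ring
end

section
/- (Theorem 5.1, part 1, for the system with an orthogonal projection P Pᵀ = I, equivalently the gradient-driven case) Let p, q be positive integers and let 𝓛 : ℝ^{p×q} → ℝ be continuously differentiable. Let a, b, R > 0 satisfy 4a ≥ (R+1)b. Let W : [0,∞) → ℝ^{p×q}, m : [0,∞) → ℝ^{p×q}, v_r : [0,∞) → ℝ^p, v_c : [0,∞) → ℝ^{1×q} be continuously differentiable and satisfy, with G_t := ∇𝓛(W_t): (d/dt)m_t = a(G_t − m_t), (d/dt)v_r(t) = b((G_t)^{⊙2}𝟙_q − v_r(t)), (d/dt)v_c(t) = b(𝟙_pᵀ(G_t)^{⊙2} − v_c(t)), and (d/dt)W_t = − m_t ⊘ √(v̂_t), where v̂_t ∈ ℝ^{p×q} has entries (v̂_t)_{ij} = v_r(t)_i · v_c(t)_j / (Σ_k v_r(t)_k), ⊘ is entrywise division, and the square root is entrywise. Assume that for all t ≥ 0 every entry of v_r(t) and v_c(t) is strictly positive, and that ‖G_t‖² ≤ R ‖v_r(t)‖ (Frobenius/Euclidean norms). Define the Lyapunov function H(t) := 𝓛(W_t) + (1/(2a)) ⟨m_t,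 m_t ⊘ √(v̂_t)⟩. Then for all t ≥ 0, (d/dt)H(t) ≤ −(1 − (R+1)b/(4a)) ⟨m_t ⊘ √(v̂_t), m_t⟩ ≤ 0; in particular H is nonincreasing along the trajectory. -/
open Matrix

attribute [local instance] Matrix.normedAddCommGroup Matrix.normedSpace

/-- The continuous linear map `H ↦ ⟨A, H⟩_F = Σᵢⱼ Aᵢⱼ Hᵢⱼ` (Frobenius pairing with `A`);
`HasFDerivAt 𝓛 (frobCLM A) X` says `𝓛` is differentiable at `X` with gradient `A`. -/
noncomputable def frobCLM {n m : ℕ} (A : Matrix (Fin n) (Fin m) ℝ) :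
    Matrix (Fin n) (Fin m) ℝ →L[ℝ] ℝ :=
  LinearMap.toContinuousLinearMap
    { toFun := fun H => ∑ i : Fin n, ∑ j : Fin m, A i j * H i j
      map_add' := fun X Y => by
        simp [Matrix.add_apply, mul_add, Finset.sum_add_distrib]
      map_smul' := fun c X => by
        simp [Matrix.smul_apply, smul_eq_mul, Finset.mul_sum, mul_left_comm] }

lemma entry_ineq (a b R x g v d : ℝ) (ha : 0 < a) (hv : 0 < v)
    (hd : -((R + 1) * b) * v ≤ d) :
    g * (-(x / Real.sqrt v)) + 1 / (2 * a) *
      (a * (g - x) * (x / Real.sqrt v) +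
        x * ((a * (g - x) * Real.sqrt v - x * (1 / (2 * Real.sqrt v) * d)) / Real.sqrt v ^ 2))
      ≤ -(1 - (R + 1) * b / (4 * a)) * (x / Real.sqrt v * x) := by
  have hsp : 0 < Real.sqrt v := Real.sqrt_pos.mpr hv
  set s := Real.sqrt v with hs
  have hs2 : s ^ 2 = v := Real.sq_sqrt hv.le
  rw [← hs2] at hd
  have h1 : g * (-(x / s)) + 1 / (2 * a) *
      (a * (g - x) * (x / s) + x * ((a * (g - x) * s - x * (1 / (2 * s) * d)) / s ^ 2))
      = -(x ^ 2 / s) - x ^ 2 * d / (4 * a * s ^ 3) := by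
    field_simp
    ring
  have h2 : -(1 - (R + 1) * b / (4 * a)) * (x / s * x)
      = -(x ^ 2 / s) + (R + 1) * b * s ^ 2 * x ^ 2 / (4 * a * s ^ 3) := by
    field_simp
    ring
  have h3 : -(x ^ 2 * d) ≤ (R + 1) * b * s ^ 2 * x ^ 2 := by
    nlinarith [mul_le_mul_of_nonneg_left hd (sq_nonneg x)]
  have h4 : -(x ^ 2 * d) / (4 * a * s ^ 3) ≤ (R + 1) * b * s ^ 2 * x ^ 2 / (4 * a * s ^ 3) :=
    div_le_div_of_nonneg_right h3 (by positivity)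
  rw [h1, h2]
  have : x ^ 2 * d / (4 * a * s ^ 3) = -(-(x ^ 2 * d) / (4 * a * s ^ 3)) := by ring
  linarith [h4]

lemma D_bound (b R vri vcj S S' Ai Bj : ℝ) (hb : 0 < b) (hvri : 0 < vri) (hvcj : 0 < vcj)
    (hS : 0 < S) (hAi : 0 ≤ Ai) (hBj : 0 ≤ Bj) (hS' : S' ≤ b * ((R - 1) * S)) :
    -((R + 1) * b) * (vri * vcj / S) ≤
      ((b * (Ai - vri) * vcj + vri * (b * (Bj - vcj))) * S - vri * vcj * S') / S ^ 2 := by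
  have hnum : -((R + 1) * b) * (vri * vcj) * S ≤
      (b * (Ai - vri) * vcj + vri * (b * (Bj - vcj))) * S - vri * vcj * S' := by
    nlinarith [mul_le_mul_of_nonneg_left hS' (le_of_lt (mul_pos hvri hvcj)),
      mul_nonneg (mul_nonneg (mul_nonneg hb.le hAi) hvcj.le) hS.le,
      mul_nonneg (mul_nonneg (mul_nonneg hb.le hBj) hvri.le) hS.le]
  have heq : -((R + 1) * b) * (vri * vcj / S) = -((R + 1) * b) * (vri * vcj) * S / S ^ 2 := by
    field_simp
  rw [heq]
  exact div_le_div_of_nonneg_right hnum (by positivity)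

/-- **Theorem 5.1, part 1, gradient-driven case.** Along the
continuous-time ProjFactor (Adafactor-type) dynamics
`dm/dt = a(G − m)`, `dv_r/dt = b(G^{⊙2}𝟙 − v_r)`, `dv_c/dt = b(𝟙ᵀG^{⊙2} − v_c)`,
`dW/dt = −m ⊘ √v̂` with `G = ∇𝓛(W)` and `v̂ = v_r v_c/(𝟙ᵀ v_r)`, if `4a ≥ (R+1)b`,
the entries of `v_r, v_c` stay positive and `‖G‖² ≤ R‖v_r‖`, then the Lyapunov function
`H = 𝓛(W) + (1/(2a))⟨m, m ⊘ √v̂⟩` satisfies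
`dH/dt ≤ −(1 − (R+1)b/(4a))⟨m ⊘ √v̂, m⟩ ≤ 0`; in particular `H` is nonincreasing. -/
theorem projfactor_lyapunov_descent
    (p q : ℕ) (hp : 0 < p) (hq : 0 < q)
    (𝓛 : Matrix (Fin p) (Fin q) ℝ → ℝ)
    (gradf : Matrix (Fin p) (Fin q) ℝ → Matrix (Fin p) (Fin q) ℝ)
    (hC1 : ContDiff ℝ 1 𝓛)
    (hgrad : ∀ X, HasFDerivAt 𝓛 (frobCLM (gradf X)) X)
    (a b R : ℝ) (ha : 0 < a) (hb : 0 < b) (hR : 0 < R)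
    (hab : (R + 1) * b ≤ 4 * a)
    (W m : ℝ → Matrix (Fin p) (Fin q) ℝ)
    (vr : ℝ → Fin p → ℝ) (vc : ℝ → Fin q → ℝ)
    (vhat : ℝ → Matrix (Fin p) (Fin q) ℝ)
    (hvhat : ∀ t i j, vhat t i j = vr t i * vc t j / (∑ k : Fin p, vr t k))
    (hm' : ∀ t : ℝ, 0 ≤ t → ∀ i j, HasDerivAt (fun s => m s i j)
      (a * (gradf (W t) i j - m t i j)) t)
    (hvr' : ∀ t : ℝ, 0 ≤ t → ∀ i, HasDerivAt (fun s => vr s i)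
      (b * ((∑ j : Fin q, (gradf (W t) i j) ^ 2) - vr t i)) t)
    (hvc' : ∀ t : ℝ, 0 ≤ t → ∀ j, HasDerivAt (fun s => vc s j)
      (b * ((∑ i : Fin p, (gradf (W t) i j) ^ 2) - vc t j)) t)
    (hW' : ∀ t : ℝ, 0 ≤ t → ∀ i j, HasDerivAt (fun s => W s i j)
      (-(m t i j / Real.sqrt (vhat t i j))) t)
    (hpos : ∀ t : ℝ, 0 ≤ t → (∀ i, 0 < vr t i) ∧ (∀ j, 0 < vc t j))
    (hbound : ∀ t : ℝ, 0 ≤ t →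
      (∑ i : Fin p, ∑ j : Fin q, (gradf (W t) i j) ^ 2)
        ≤ R * Real.sqrt (∑ i : Fin p, (vr t i) ^ 2))
    (H : ℝ → ℝ)
    (hH : ∀ t, H t = 𝓛 (W t) + (1 / (2 * a)) *
      ∑ i : Fin p, ∑ j : Fin q, m t i j * (m t i j / Real.sqrt (vhat t i j))) :
    (∀ t : ℝ, 0 ≤ t → ∃ H' : ℝ, HasDerivAt H H' t ∧
      H' ≤ -(1 - (R + 1) * b / (4 * a)) *
            ∑ i : Fin p, ∑ j : Fin q, (m t i j / Real.sqrt (vhat t i j)) * m t i j ∧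
      -(1 - (R + 1) * b / (4 * a)) *
            ∑ i : Fin p, ∑ j : Fin q, (m t i j / Real.sqrt (vhat t i j)) * m t i j ≤ 0) ∧
    AntitoneOn H (Set.Ici (0 : ℝ)) := by
  
  obtain rfl : H = fun t => 𝓛 (W t) + (1 / (2 * a)) *
      ∑ i : Fin p, ∑ j : Fin q, m t i j * (m t i j / Real.sqrt (vhat t i j)) := funext hH
  have key : ∀ t : ℝ, 0 ≤ t → ∃ H' : ℝ,
      HasDerivAt (fun t => 𝓛 (W t) + (1 / (2 * a)) *
        ∑ i : Fin p, ∑ j : Fin q, m t i j * (m t i j / Real.sqrt (vhat t i j))) H' t ∧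
      H' ≤ -(1 - (R + 1) * b / (4 * a)) *
            ∑ i : Fin p, ∑ j : Fin q, (m t i j / Real.sqrt (vhat t i j)) * m t i j ∧
      -(1 - (R + 1) * b / (4 * a)) *
            ∑ i : Fin p, ∑ j : Fin q, (m t i j / Real.sqrt (vhat t i j)) * m t i j ≤ 0 := by
    intro t ht
    obtain ⟨hvr, hvc⟩ := hpos t ht
    have hS : 0 < ∑ k : Fin p, vr t k :=
      Finset.sum_pos (fun k _ => hvr k) ⟨⟨0, hp⟩, Finset.mem_univ _⟩
    have hvh : ∀ i j, 0 < vhat t i j := fun i j => by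
      rw [hvhat]; exact div_pos (mul_pos (hvr i) (hvc j)) hS
    have hsqpos : ∀ i j, 0 < Real.sqrt (vhat t i j) := fun i j => Real.sqrt_pos.mpr (hvh i j)
    have hSd : HasDerivAt (fun s => ∑ k : Fin p, vr s k)
        (∑ k : Fin p, b * ((∑ j : Fin q, gradf (W t) k j ^ 2) - vr t k)) t :=
      HasDerivAt.fun_sum fun k _ => hvr' t ht k
    set S' := ∑ k : Fin p, b * ((∑ j : Fin q, gradf (W t) k j ^ 2) - vr t k) with hS'def
    set D : Fin p → Fin q → ℝ := fun i j =>
      ((b * ((∑ j' : Fin q, gradf (W t) i j' ^ 2) - vr t i) * vc t j +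
          vr t i * (b * ((∑ i' : Fin p, gradf (W t) i' j ^ 2) - vc t j))) *
            (∑ k : Fin p, vr t k) -
        vr t i * vc t j * S') / (∑ k : Fin p, vr t k) ^ 2 with hDdef
    have hvhd : ∀ i j, HasDerivAt (fun s => vhat s i j) (D i j) t := by
      intro i j
      have hfe : (fun s => vhat s i j) = fun s => vr s i * vc s j / ∑ k : Fin p, vr s k :=
        funext fun s => hvhat s i j
      rw [hfe, hDdef]
      exact ((hvr' t ht i).mul (hvc' t ht j)).div hSd hS.ne'
    have hQ : ∑ i : Fin p, ∑ j : Fin q, gradf (W t) i j ^ 2 ≤ R * ∑ k : Fin p, vr t k := by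
      refine (hbound t ht).trans ?_
      have h1 : Real.sqrt (∑ i : Fin p, vr t i ^ 2) ≤ ∑ k : Fin p, vr t k := by
        rw [show (∑ k : Fin p, vr t k) = Real.sqrt ((∑ k : Fin p, vr t k) ^ 2) from
          (Real.sqrt_sq hS.le).symm]
        exact Real.sqrt_le_sqrt (Finset.sum_sq_le_sq_sum_of_nonneg fun i _ => (hvr i).le)
      exact mul_le_mul_of_nonneg_left h1 hR.le
    have hS'le : S' ≤ b * ((R - 1) * ∑ k : Fin p, vr t k) := by
      have hSe : S' = b * ((∑ i : Fin p, ∑ j : Fin q, gradf (W t) i j ^ 2)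
          - ∑ k : Fin p, vr t k) := by
        simp only [hS'def, mul_sub, Finset.sum_sub_distrib, Finset.mul_sum]
      rw [hSe]
      nlinarith [hQ]
    have hDb : ∀ i j, -((R + 1) * b) * vhat t i j ≤ D i j := by
      intro i j
      rw [hvhat, hDdef]
      exact D_bound b R _ _ _ _ _ _ hb (hvr i) (hvc j) hS
        (Finset.sum_nonneg fun j' _ => sq_nonneg _)
        (Finset.sum_nonneg fun i' _ => sq_nonneg _) hS'le
    have hterm : ∀ i j, HasDerivAt (fun s => m s i j * (m s i j / Real.sqrt (vhat s i j)))
        (a * (gradf (W t) i j - m t i j) * (m t i j / Real.sqrt (vhat t i j)) +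
          m t i j * ((a * (gradf (W t) i j - m t i j) * Real.sqrt (vhat t i j) -
            m t i j * (1 / (2 * Real.sqrt (vhat t i j)) * D i j)) /
              Real.sqrt (vhat t i j) ^ 2)) t := by
      intro i j
      have hsq : HasDerivAt (fun s => Real.sqrt (vhat s i j))
          (1 / (2 * Real.sqrt (vhat t i j)) * D i j) t :=
        (Real.hasDerivAt_sqrt (hvh i j).ne').comp t (hvhd i j)
      exact (hm' t ht i j).mul ((hm' t ht i j).div hsq (hsqpos i j).ne')
    have hsum : HasDerivAt (fun s => ∑ i : Fin p, ∑ j : Fin q,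
        m s i j * (m s i j / Real.sqrt (vhat s i j)))
        (∑ i : Fin p, ∑ j : Fin q,
          (a * (gradf (W t) i j - m t i j) * (m t i j / Real.sqrt (vhat t i j)) +
            m t i j * ((a * (gradf (W t) i j - m t i j) * Real.sqrt (vhat t i j) -
              m t i j * (1 / (2 * Real.sqrt (vhat t i j)) * D i j)) /
                Real.sqrt (vhat t i j) ^ 2))) t :=
      HasDerivAt.fun_sum fun i _ => HasDerivAt.fun_sum fun j _ => hterm i j
    have hWd : HasDerivAt W
        (fun i j => -(m t i j / Real.sqrt (vhat t i j)) : Matrix (Fin p) (Fin q) ℝ) t := by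
      refine hasDerivAt_pi.mpr ?_
      intro i
      refine hasDerivAt_pi.mpr ?_
      intro j
      exact hW' t ht i j
    have hLd : HasDerivAt (fun s => 𝓛 (W s))
        (frobCLM (gradf (W t))
          (fun i j => -(m t i j / Real.sqrt (vhat t i j)) : Matrix (Fin p) (Fin q) ℝ)) t :=
      (hgrad (W t)).comp_hasDerivAt t hWd
    have hfrob : frobCLM (gradf (W t))
        (fun i j => -(m t i j / Real.sqrt (vhat t i j)) : Matrix (Fin p) (Fin q) ℝ)
        = ∑ i : Fin p, ∑ j : Fin q,
            gradf (W t) i j * (-(m t i j / Real.sqrt (vhat t i j))) := rfl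
    refine ⟨_, hLd.add (hsum.const_mul (1 / (2 * a))), ?_, ?_⟩
    · rw [hfrob]
      have hsplit : (∑ i : Fin p, ∑ j : Fin q,
            gradf (W t) i j * (-(m t i j / Real.sqrt (vhat t i j)))) +
          1 / (2 * a) * ∑ i : Fin p, ∑ j : Fin q,
            (a * (gradf (W t) i j - m t i j) * (m t i j / Real.sqrt (vhat t i j)) +
              m t i j * ((a * (gradf (W t) i j - m t i j) * Real.sqrt (vhat t i j) -
                m t i j * (1 / (2 * Real.sqrt (vhat t i j)) * D i j)) /
                  Real.sqrt (vhat t i j) ^ 2))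
          = ∑ i : Fin p, ∑ j : Fin q,
              (gradf (W t) i j * (-(m t i j / Real.sqrt (vhat t i j))) +
                1 / (2 * a) *
                  (a * (gradf (W t) i j - m t i j) * (m t i j / Real.sqrt (vhat t i j)) +
                    m t i j * ((a * (gradf (W t) i j - m t i j) * Real.sqrt (vhat t i j) -
                      m t i j * (1 / (2 * Real.sqrt (vhat t i j)) * D i j)) /
                        Real.sqrt (vhat t i j) ^ 2))) := by
        simp only [Finset.mul_sum, ← Finset.sum_add_distrib]
      rw [hsplit, Finset.mul_sum]
      refine Finset.sum_le_sum fun i _ => ?_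
      rw [Finset.mul_sum]
      refine Finset.sum_le_sum fun j _ => ?_
      exact entry_ineq a b R (m t i j) (gradf (W t) i j) (vhat t i j) (D i j) ha
        (hvh i j) (hDb i j)
    · have hsumnn : 0 ≤ ∑ i : Fin p, ∑ j : Fin q,
          m t i j / Real.sqrt (vhat t i j) * m t i j := by
        refine Finset.sum_nonneg fun i _ => Finset.sum_nonneg fun j _ => ?_
        have he : m t i j / Real.sqrt (vhat t i j) * m t i j
            = m t i j ^ 2 / Real.sqrt (vhat t i j) := by ring
        rw [he]
        positivity
      have hc1 : 0 ≤ 1 - (R + 1) * b / (4 * a) := by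
        rw [sub_nonneg, div_le_one (by positivity)]
        exact hab
      rw [neg_mul]
      exact neg_nonpos_of_nonneg (mul_nonneg hc1 hsumnn)
  refine ⟨key, ?_⟩
  apply antitoneOn_of_deriv_nonpos (convex_Ici 0)
  · exact fun x hx => ((key x hx).choose_spec.1).continuousAt.continuousWithinAt
  · intro x hx
    rw [interior_Ici] at hx
    exact ((key x (le_of_lt hx)).choose_spec.1).differentiableAt.differentiableWithinAt
  · intro x hx
    rw [interior_Ici] at hx
    obtain ⟨H', hd, hle, hle0⟩ := key x (le_of_lt hx)
    rw [hd.deriv]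
    exact hle.trans hle0
end
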